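/- Let k ≥ 1. There exists an unextendible product basis in C^2 ⊗ C^2 ⊗ C^{4k+1} of size 4k + 4. -/

import Mathlib

open scoped Classical

/-- The product (tensor) vector in `ℂ^{d₁} ⊗ ⋯ ⊗ ℂ^{d_p}`, realized as
`EuclideanSpace ℂ (Π j, Fin (d j))`, built from local vectors `f j`. -/
noncomputable def prodVec {p : ℕ} {d : Fin p → ℕ}
    (f : ∀ j, EuclideanSpace ℂ (Fin (d j))) :
    EuclideanSpace ℂ (∀ j, Fin (d j)) :=
  WithLp.toLp 2 (fun x => ∏ j, f j (x j))

/-- A product state: a nonzero vector of the form `v₁ ⊗ ⋯ ⊗ v_p`. -/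
def IsProductState {p : ℕ} {d : Fin p → ℕ}
    (v : EuclideanSpace ℂ (∀ j, Fin (d j))) : Prop :=
  v ≠ 0 ∧ ∃ f : ∀ j, EuclideanSpace ℂ (Fin (d j)), v = prodVec f

/-- An unextendible product basis: a finite set of mutually orthogonal product
states such that every product state orthogonal to all of them is zero
(equivalently, no product state is orthogonal to all of them). -/
def IsUPB {p : ℕ} {d : Fin p → ℕ}
    (S : Finset (EuclideanSpace ℂ (∀ j, Fin (d j)))) : Prop :=
  (∀ v ∈ S, IsProductState v) ∧
  (∀ v ∈ S, ∀ w ∈ S, v ≠ w → (inner ℂ v w : ℂ) = 0) ∧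
  ∀ z : EuclideanSpace ℂ (∀ j, Fin (d j)),
    IsProductState z → ¬ (∀ v ∈ S, (inner ℂ v z : ℂ) = 0)

namespace UPB18

/-- inner product of product vectors factorizes -/
lemma inner_prodVec {p : ℕ} {d : Fin p → ℕ}
    (f g : ∀ j, EuclideanSpace ℂ (Fin (d j))) :
    (inner ℂ (prodVec f) (prodVec g) : ℂ) = ∏ j, (inner ℂ (f j) (g j) : ℂ) := by
  classical
  simp only [PiLp.inner_apply, RCLike.inner_apply, prodVec]
  rw [Finset.prod_univ_sum]
  rw [Fintype.piFinset_univ]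
  apply Finset.sum_congr rfl
  intro x _
  rw [map_prod, ← Finset.prod_mul_distrib]

lemma prodVec_eq_zero {p : ℕ} {d : Fin p → ℕ}
    (f : ∀ j, EuclideanSpace ℂ (Fin (d j))) (j0 : Fin p) (h : f j0 = 0) :
    prodVec f = 0 := by
  ext x
  show (∏ j, f j (x j)) = 0
  apply Finset.prod_eq_zero (Finset.mem_univ j0)
  rw [h]; rfl

/-- local qubit vector -/
noncomputable def q2 (s t : ℤ) : EuclideanSpace ℂ (Fin 2) :=
  WithLp.toLp 2 (fun i => if i.val = 0 then (s : ℂ) else (t : ℂ))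

lemma inner_q2 (s t u v : ℤ) :
    (inner ℂ (q2 s t) (q2 u v) : ℂ) = ((s * u + t * v : ℤ) : ℂ) := by
  simp only [PiLp.inner_apply, RCLike.inner_apply, q2, Fin.sum_univ_two]
  push_cast
  ring_nf
  simp [map_intCast]
  try ring

lemma inner_q2_left (s t : ℤ) (a : EuclideanSpace ℂ (Fin 2)) :
    (inner ℂ (q2 s t) a : ℂ) = (s : ℂ) * a 0 + (t : ℂ) * a 1 := by
  simp only [PiLp.inner_apply, RCLike.inner_apply, q2, Fin.sum_univ_two]
  norm_num [map_intCast]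
  ring

/-- two independent constraints kill a vector in ℂ² -/
lemma qubit_zero (s t u v : ℤ) (hdet : s * v - t * u ≠ 0)
    (a : EuclideanSpace ℂ (Fin 2))
    (h1 : (inner ℂ (q2 s t) a : ℂ) = 0) (h2 : (inner ℂ (q2 u v) a : ℂ) = 0) :
    a = 0 := by
  rw [inner_q2_left] at h1 h2
  have hd : ((s * v - t * u : ℤ) : ℂ) ≠ 0 := by exact_mod_cast hdet
  ext i
  fin_cases i
  · show a 0 = 0
    have h3 : ((s * v - t * u : ℤ) : ℂ) * a 0 = (v:ℂ) * ((s:ℂ) * a 0 + (t:ℂ) * a 1) - (t:ℂ) * ((u:ℂ) * a 0 + (v:ℂ) * a 1) := by push_cast; ring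
    rw [h1, h2] at h3
    simpa using (mul_eq_zero.mp (by rw [h3]; ring)).resolve_left hd
  · show a 1 = 0
    have h3 : ((s * v - t * u : ℤ) : ℂ) * a 1 = (s:ℂ) * ((u:ℂ) * a 0 + (v:ℂ) * a 1) - (u:ℂ) * ((s:ℂ) * a 0 + (t:ℂ) * a 1) := by push_cast; ring
    rw [h1, h2] at h3
    simpa using (mul_eq_zero.mp (by rw [h3]; ring)).resolve_left hd

def Bt (k j : ℕ) : ℕ :=
  if j = 0 ∨ j = 2*k+4 then 1
  else if j = 4*k+3 ∨ j = 2*k+3 then 2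
  else if j % 2 = 1 then 1 else 2

def Bs (k j : ℕ) : ℤ :=
  if j = 0 ∨ j = 2*k+1 ∨ j = 2*k+2 ∨ j = 4*k+3 then 1
  else if j = 1 ∨ j = 2*k+4 ∨ j = 2 ∨ j = 2*k+3 then 2
  else if j % 2 = 1 then (j : ℤ) + 10 else (j : ℤ) + 9

variable (k : ℕ)

lemma Bt0 : Bt k 0 = 1 := by unfold Bt; rw [if_pos (by omega)]
lemma Bt1 : Bt k 1 = 1 := by unfold Bt; rw [if_neg (by omega), if_neg (by omega), if_pos (by omega)]
lemma Bt2 : Bt k 2 = 2 := by unfold Bt; rw [if_neg (by omega), if_neg (by omega), if_neg (by omega)]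
lemma Bt_2k1 : Bt k (2*k+1) = 1 := by unfold Bt; rw [if_neg (by omega), if_neg (by omega), if_pos (by omega)]
lemma Bt_2k2 : Bt k (2*k+2) = 2 := by unfold Bt; rw [if_neg (by omega), if_neg (by omega), if_neg (by omega)]
lemma Bt_2k3 : Bt k (2*k+3) = 2 := by unfold Bt; rw [if_neg (by omega), if_pos (by omega)]
lemma Bt_2k4 : Bt k (2*k+4) = 1 := by unfold Bt; rw [if_pos (by omega)]
lemma Bt_4k3 : Bt k (4*k+3) = 2 := by
  unfold Bt; rw [if_neg (by omega), if_pos (by omega)]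

lemma Bt_un (j : ℕ) (h0 : j ≠ 0) (h1 : j ≠ 2*k+4) (h2 : j ≠ 4*k+3) (h3 : j ≠ 2*k+3) :
    Bt k j = (if j % 2 = 1 then 1 else 2) := by
  unfold Bt; rw [if_neg (by omega), if_neg (by omega)]

lemma Bs_spec (j : ℕ) :
    ((j = 0 ∨ j = 2*k+1 ∨ j = 2*k+2 ∨ j = 4*k+3) ∧ Bs k j = 1) ∨
    (¬(j = 0 ∨ j = 2*k+1 ∨ j = 2*k+2 ∨ j = 4*k+3) ∧ (j = 1 ∨ j = 2*k+4 ∨ j = 2 ∨ j = 2*k+3) ∧ Bs k j = 2) ∨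
    (¬(j = 0 ∨ j = 2*k+1 ∨ j = 2*k+2 ∨ j = 4*k+3) ∧ ¬(j = 1 ∨ j = 2*k+4 ∨ j = 2 ∨ j = 2*k+3) ∧ j % 2 = 1 ∧ Bs k j = (j:ℤ) + 10) ∨
    (¬(j = 0 ∨ j = 2*k+1 ∨ j = 2*k+2 ∨ j = 4*k+3) ∧ ¬(j = 1 ∨ j = 2*k+4 ∨ j = 2 ∨ j = 2*k+3) ∧ j % 2 ≠ 1 ∧ Bs k j = (j:ℤ) + 9) := by
  unfold Bs; split_ifs with h1 h2 h3
  · exact Or.inl ⟨h1, rfl⟩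
  · exact Or.inr (Or.inl ⟨h1, h2, rfl⟩)
  · exact Or.inr (Or.inr (Or.inl ⟨h1, h2, h3, rfl⟩))
  · exact Or.inr (Or.inr (Or.inr ⟨h1, h2, h3, rfl⟩))

def isBpair (k i j : ℕ) : Prop :=
  (i = 0 ∧ j = 2*k+1) ∨ (i = 2*k+1 ∧ j = 0) ∨
  (i = 1 ∧ j = 2*k+4) ∨ (i = 2*k+4 ∧ j = 1) ∨
  (i = 2 ∧ j = 2*k+3) ∨ (i = 2*k+3 ∧ j = 2) ∨
  (i = 2*k+2 ∧ j = 4*k+3) ∨ (i = 4*k+3 ∧ j = 2*k+2)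

lemma Bcase11 (i j : ℕ) (hk : 1 ≤ k) (hij : i ≠ j)
    (hi : i = 0 ∨ i = 2*k+1 ∨ i = 2*k+2 ∨ i = 4*k+3)
    (hj : j = 0 ∨ j = 2*k+1 ∨ j = 2*k+2 ∨ j = 4*k+3)
    (ht : Bt k i = Bt k j) : isBpair k i j := by
  unfold isBpair
  rcases hi with rfl|rfl|rfl|rfl <;> rcases hj with rfl|rfl|rfl|rfl <;>
    simp only [Bt0, Bt_2k1, Bt_2k2, Bt_4k3] at ht <;> omega

lemma Bcase22 (i j : ℕ) (hk : 1 ≤ k) (hij : i ≠ j)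
    (hi : i = 1 ∨ i = 2*k+4 ∨ i = 2 ∨ i = 2*k+3)
    (hj : j = 1 ∨ j = 2*k+4 ∨ j = 2 ∨ j = 2*k+3)
    (ht : Bt k i = Bt k j) : isBpair k i j := by
  unfold isBpair
  rcases hi with rfl|rfl|rfl|rfl <;> rcases hj with rfl|rfl|rfl|rfl <;>
    simp only [Bt1, Bt2, Bt_2k3, Bt_2k4] at ht <;> omega

lemma B_slope_inj (i j : ℕ) (hk : 1 ≤ k) (hij : i ≠ j)
    (ht : Bt k i = Bt k j) (hs : Bs k i = Bs k j) : isBpair k i j := by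
  rcases Bs_spec k i with ⟨hi, vi⟩ | ⟨hi0, hi, vi⟩ | ⟨hi0, hi1, hip, vi⟩ | ⟨hi0, hi1, hip, vi⟩ <;>
  rcases Bs_spec k j with ⟨hj, vj⟩ | ⟨hj0, hj, vj⟩ | ⟨hj0, hj1, hjp, vj⟩ | ⟨hj0, hj1, hjp, vj⟩
  · exact Bcase11 k i j hk hij hi hj ht
  · rw [vi, vj] at hs; omega
  · rw [vi, vj] at hs; omega
  · rw [vi, vj] at hs; omega
  · rw [vi, vj] at hs; omega
  · exact Bcase22 k i j hk hij hi hj ht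
  · rw [vi, vj] at hs; omega
  · rw [vi, vj] at hs; omega
  · rw [vi, vj] at hs; omega
  · rw [vi, vj] at hs; omega
  · rw [vi, vj] at hs; omega
  · rw [Bt_un k i (by omega) (by omega) (by omega) (by omega),
        Bt_un k j (by omega) (by omega) (by omega) (by omega),
        if_pos hip, if_neg hjp] at ht; omega
  · rw [vi, vj] at hs; omega
  · rw [vi, vj] at hs; omega
  · rw [Bt_un k i (by omega) (by omega) (by omega) (by omega),
        Bt_un k j (by omega) (by omega) (by omega) (by omega),
        if_neg hip, if_pos hjp] at ht; omega
  · rw [vi, vj] at hs; omega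

lemma Bt_spec12 (j : ℕ) : Bt k j = 1 ∨ Bt k j = 2 := by
  unfold Bt; split_ifs <;> omega

def B0 (k j : ℕ) : ℤ := if Bt k j = 1 then 1 else Bs k j
def B1 (k j : ℕ) : ℤ := if Bt k j = 1 then Bs k j else -1

lemma Bs_pos (j : ℕ) : 1 ≤ Bs k j := by
  unfold Bs; split_ifs <;> omega

lemma B_det (i j : ℕ) (hk : 1 ≤ k) (hij : i ≠ j) (hp : ¬ isBpair k i j) :
    B0 k i * B1 k j - B0 k j * B1 k i ≠ 0 := by
  have h1 := Bs_pos k i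
  have h2 := Bs_pos k j
  by_cases hi : Bt k i = 1 <;> by_cases hj : Bt k j = 1
  · have hs : Bs k i ≠ Bs k j := fun hs => hp (B_slope_inj k i j hk hij (hi.trans hj.symm) hs)
    simp only [B0, B1, if_pos hi, if_pos hj]; omega
  · simp only [B0, B1, if_pos hi, if_neg hj]
    intro h
    have : (0:ℤ) < Bs k j * Bs k i := by positivity
    nlinarith
  · simp only [B0, B1, if_neg hi, if_pos hj]
    intro h
    have : (0:ℤ) < Bs k i * Bs k j := by positivity
    nlinarith
  · have ht : Bt k i = Bt k j := by
      have := Bt_spec12 k i; have := Bt_spec12 k j; omega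
    have hs : Bs k i ≠ Bs k j := fun hs => hp (B_slope_inj k i j hk hij ht hs)
    simp only [B0, B1, if_neg hi, if_neg hj]; omega

-- orthogonality helpers
lemma Bdot12 (i j : ℕ) (h1 : Bt k i = 1) (h2 : Bt k j ≠ 1) (hs : Bs k i = Bs k j) :
    B0 k i * B0 k j + B1 k i * B1 k j = 0 := by
  simp only [B0, B1, if_pos h1, if_neg h2]; omega

lemma Bdot21 (i j : ℕ) (h1 : Bt k i ≠ 1) (h2 : Bt k j = 1) (hs : Bs k i = Bs k j) :
    B0 k i * B0 k j + B1 k i * B1 k j = 0 := by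
  simp only [B0, B1, if_neg h1, if_pos h2]; omega

variable (hk : 1 ≤ k)
include hk

lemma Bs0 : Bs k 0 = 1 := by unfold Bs; rw [if_pos (by omega)]
lemma Bs1 : Bs k 1 = 2 := by unfold Bs; rw [if_neg (by omega), if_pos (by omega)]
lemma Bs2 : Bs k 2 = 2 := by unfold Bs; rw [if_neg (by omega), if_pos (by omega)]
lemma Bs_2k1 : Bs k (2*k+1) = 1 := by unfold Bs; rw [if_pos (by omega)]
lemma Bs_2k2 : Bs k (2*k+2) = 1 := by unfold Bs; rw [if_pos (by omega)]
lemma Bs_2k3 : Bs k (2*k+3) = 2 := by unfold Bs; rw [if_neg (by omega), if_pos (by omega)]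
lemma Bs_2k4 : Bs k (2*k+4) = 2 := by unfold Bs; rw [if_neg (by omega), if_pos (by omega)]
lemma Bs_4k3 : Bs k (4*k+3) = 1 := by unfold Bs; rw [if_pos (by omega)]

omit hk

lemma Bs_unodd (j : ℕ) (hj : j % 2 = 1) (h1 : j ≠ 1) (h2 : j ≠ 2*k+1) (h3 : j ≠ 2*k+3) (h4 : j ≠ 4*k+3) :
    Bs k j = (j:ℤ) + 10 := by
  unfold Bs; rw [if_neg (by omega), if_neg (by omega), if_pos (by omega)]

lemma Bs_uneven (j : ℕ) (hj : j % 2 = 0) (h1 : j ≠ 0) (h2 : j ≠ 2) (h3 : j ≠ 2*k+2) (h4 : j ≠ 2*k+4) :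
    Bs k j = (j:ℤ) + 9 := by
  unfold Bs; rw [if_neg (by omega), if_neg (by omega), if_neg (by omega)]

/-- b-orthogonality along all needed edges -/
lemma B_edge (i : ℕ) (hk : 1 ≤ k) (hi : i % 2 = 1) (hi4 : i ≤ 4*k+1) :
    B0 k i * B0 k (i+1) + B1 k i * B1 k (i+1) = 0 := by
  by_cases c1 : i = 1
  · subst c1
    exact Bdot12 k 1 2 (Bt1 k) (by rw [Bt2 k]; omega) (by rw [Bs1 k hk, Bs2 k hk])
  by_cases c2 : i = 2*k+1
  · subst c2
    exact Bdot12 k _ _ (Bt_2k1 k) (by rw [Bt_2k2 k]; omega) (by rw [Bs_2k1 k hk, Bs_2k2 k hk])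
  by_cases c3 : i = 2*k+3
  · subst c3
    exact Bdot21 k _ _ (by rw [Bt_2k3 k]; omega) (by rw [show 2*k+3+1 = 2*k+4 by ring, Bt_2k4 k])
      (by rw [Bs_2k3 k hk, show 2*k+3+1 = 2*k+4 by ring, Bs_2k4 k hk])
  · refine Bdot12 k _ _ ?_ ?_ ?_
    · rw [Bt_un k i (by omega) (by omega) (by omega) (by omega), if_pos hi]
    · rw [Bt_un k (i+1) (by omega) (by omega) (by omega) (by omega), if_neg (by omega)]; omega
    · rw [Bs_unodd k i hi c1 c2 c3 (by omega), Bs_uneven k (i+1) (by omega) (by omega) (by omega) (by omega) (by omega)]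
      push_cast; ring

lemma B_wrap (hk : 1 ≤ k) : B0 k (4*k+3) * B0 k 0 + B1 k (4*k+3) * B1 k 0 = 0 :=
  Bdot21 k _ _ (by rw [Bt_4k3 k]; omega) (Bt0 k) (by rw [Bs_4k3 k hk, Bs0 k hk])

lemma B_chord0 (hk : 1 ≤ k) : B0 k 0 * B0 k (2*k+2) + B1 k 0 * B1 k (2*k+2) = 0 :=
  Bdot12 k _ _ (Bt0 k) (by rw [Bt_2k2 k]; omega) (by rw [Bs0 k hk, Bs_2k2 k hk])

lemma B_chord1 (hk : 1 ≤ k) : B0 k 1 * B0 k (2*k+3) + B1 k 1 * B1 k (2*k+3) = 0 :=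
  Bdot12 k _ _ (Bt1 k) (by rw [Bt_2k3 k]; omega) (by rw [Bs1 k hk, Bs_2k3 k hk])

-- A side
def A0 (i : ℕ) : ℤ := if i % 2 = 0 then 1 else (i : ℤ) + 1
def A1 (i : ℕ) : ℤ := if i % 2 = 0 then (i : ℤ) + 2 else -1

lemma A_edge (i : ℕ) (hi : i % 2 = 0) : A0 i * A0 (i+1) + A1 i * A1 (i+1) = 0 := by
  unfold A0 A1
  rw [if_pos hi, if_pos hi, if_neg (by omega), if_neg (by omega)]
  push_cast; ring

lemma A_det (i j : ℕ) (hij : i ≠ j) : A0 i * A1 j - A0 j * A1 i ≠ 0 := by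
  unfold A0 A1
  split_ifs with h1 h2 h2 <;> intro h
  · omega
  · have h3 : (0:ℤ) ≤ ((j:ℤ)+1) * ((i:ℤ)+2) := by positivity
    nlinarith
  · have h3 : (0:ℤ) ≤ ((i:ℤ)+1) * ((j:ℤ)+2) := by positivity
    nlinarith
  · omega



def CC (k i t : ℕ) : ℤ :=
  if i = 0 then (if 2*k ≤ t then (-1)^t else 0)
  else if i = 1 then (if t ≤ 2*k then (-1)^t else 0)
  else if t+3 = i ∨ t+2 = i then 1 else 0

def gram (k i j : ℕ) : ℤ := ∑ t ∈ Finset.range (4*k+1), CC k i t * CC k j t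

lemma CC_chain (k i t : ℕ) (hi : 2 ≤ i) :
    CC k i t = if t+3 = i ∨ t+2 = i then 1 else 0 := by
  unfold CC; rw [if_neg (by omega), if_neg (by omega)]

lemma gram_chain (k i j : ℕ) (hi : 2 ≤ i) (hj : i + 2 ≤ j) : gram k i j = 0 := by
  apply Finset.sum_eq_zero
  intro t _
  rw [CC_chain k i t hi, CC_chain k j t (by omega)]
  split_ifs <;> omega

lemma neg_pow_succ_add (u : ℕ) : ((-1:ℤ))^u + (-1)^(u+1) = 0 := by
  rw [pow_succ]; ring

/-- two-term cancellation: sum equals terms at j-3 and j-2 -/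
lemma gram_cancel (k i j : ℕ) (hj3 : 3 ≤ j) (hj : j ≤ 4*k+2)
    (hval : ∀ t, (t+3 = j ∨ t+2 = j) → CC k i t = (-1)^t) (hi : i ≤ 1) :
    gram k i j = 0 := by
  have hne : j - 3 ≠ j - 2 := by omega
  have hsub : ({j-3, j-2} : Finset ℕ) ⊆ Finset.range (4*k+1) := by
    intro x hx
    simp only [Finset.mem_insert, Finset.mem_singleton] at hx
    rw [Finset.mem_range]; omega
  have hz : ∀ x ∈ Finset.range (4*k+1), x ∉ ({j-3, j-2} : Finset ℕ) → CC k i x * CC k j x = 0 := by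
    intro x _ hx
    simp only [Finset.mem_insert, Finset.mem_singleton] at hx
    push_neg at hx
    rw [CC_chain k j x (by omega), if_neg (by omega), mul_zero]
  have e1 : gram k i j = ∑ t ∈ ({j-3, j-2} : Finset ℕ), CC k i t * CC k j t :=
    (Finset.sum_subset hsub hz).symm
  rw [e1, Finset.sum_pair hne]
  rw [CC_chain k j (j-3) (by omega), CC_chain k j (j-2) (by omega),
      if_pos (by omega), if_pos (by omega),
      hval (j-3) (by omega), hval (j-2) (by omega), mul_one, mul_one]
  have e2 : j - 2 = (j-3) + 1 := by omega
  rw [e2]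
  exact neg_pow_succ_add _

lemma gram_0_low (k j : ℕ) (h2 : 2 ≤ j) (hj : j ≤ 2*k+1) : gram k 0 j = 0 := by
  apply Finset.sum_eq_zero
  intro t _
  rw [CC_chain k j t (by omega)]
  unfold CC
  rw [if_pos rfl]
  split_ifs <;> omega

lemma gram_0_high (k j : ℕ) (hj1 : 2*k+3 ≤ j) (hj : j ≤ 4*k+2) : gram k 0 j = 0 := by
  apply gram_cancel k 0 j (by omega) hj ?_ (by omega)
  intro t ht
  unfold CC
  rw [if_pos rfl, if_pos (by omega)]

lemma gram_1_low (k j : ℕ) (h2 : 3 ≤ j) (hj : j ≤ 2*k+2) : gram k 1 j = 0 := by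
  apply gram_cancel k 1 j h2 (by omega) ?_ (by omega)
  intro t ht
  unfold CC
  rw [if_neg (by omega), if_pos rfl, if_pos (by omega)]

lemma gram_1_high (k j : ℕ) (hj1 : 2*k+4 ≤ j) : gram k 1 j = 0 := by
  apply Finset.sum_eq_zero
  intro t _
  rw [CC_chain k j t (by omega)]
  unfold CC
  rw [if_neg (by omega), if_pos rfl]
  split_ifs <;> omega

/-- the full C-orthogonality for all non-edge pairs -/
lemma gram_zero (k i j : ℕ) (hij : i < j) (hj : j ≤ 4*k+3) (hk : 1 ≤ k)
    (hnotsucc : j ≠ i + 1)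
    (hc0 : ¬(i = 0 ∧ j = 2*k+2)) (hc1 : ¬(i = 1 ∧ j = 2*k+3))
    (hw : ¬(i = 0 ∧ j = 4*k+3)) : gram k i j = 0 := by
  by_cases h0 : i = 0
  · subst h0
    rcases Nat.lt_or_ge j (2*k+2) with h | h
    · exact gram_0_low k j (by omega) (by omega)
    · exact gram_0_high k j (by omega) (by omega)
  by_cases h1 : i = 1
  · subst h1
    rcases Nat.lt_or_ge j (2*k+3) with h | h
    · exact gram_1_low k j (by omega) (by omega)
    · exact gram_1_high k j (by omega)
  · exact gram_chain k i j (by omega) (by omega)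

section GS
variable (k : ℕ) (X : ℕ → ℂ)

/-- vertex 2 : X 0 -/
lemma gs2 : ∑ t ∈ Finset.range (4*k+1), (CC k 2 t : ℂ) * X t = X 0 := by
  rw [Finset.sum_eq_single_of_mem 0 (Finset.mem_range.mpr (by omega))]
  · rw [CC_chain k 2 0 (by omega), if_pos (by omega)]; push_cast; ring
  · intro b _ hb
    rw [CC_chain k 2 b (by omega), if_neg (by omega)]; push_cast; ring

/-- vertex 4k+3 : X 4k -/
lemma gsn : ∑ t ∈ Finset.range (4*k+1), (CC k (4*k+3) t : ℂ) * X t = X (4*k) := by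
  rw [Finset.sum_eq_single_of_mem (4*k) (Finset.mem_range.mpr (by omega))]
  · rw [CC_chain k (4*k+3) (4*k) (by omega), if_pos (by omega)]; push_cast; ring
  · intro b hb hb2
    rw [Finset.mem_range] at hb
    rw [CC_chain k (4*k+3) b (by omega), if_neg (by omega)]; push_cast; ring

/-- chain vertex t0+3, t0 < 4k : X t0 + X (t0+1) -/
lemma gsl (t0 : ℕ) (h : t0 < 4*k) :
    ∑ t ∈ Finset.range (4*k+1), (CC k (t0+3) t : ℂ) * X t = X t0 + X (t0+1) := by
  have hsub : ({t0, t0+1} : Finset ℕ) ⊆ Finset.range (4*k+1) := by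
    intro x hx
    simp only [Finset.mem_insert, Finset.mem_singleton] at hx
    rw [Finset.mem_range]; omega
  have hz : ∀ x ∈ Finset.range (4*k+1), x ∉ ({t0, t0+1} : Finset ℕ) →
      (CC k (t0+3) x : ℂ) * X x = 0 := by
    intro x _ hx
    simp only [Finset.mem_insert, Finset.mem_singleton] at hx
    push_neg at hx
    rw [CC_chain k (t0+3) x (by omega), if_neg (by omega)]
    push_cast; ring
  rw [← Finset.sum_subset hsub hz, Finset.sum_pair (by omega : t0 ≠ t0+1),
      CC_chain k (t0+3) t0 (by omega), CC_chain k (t0+3) (t0+1) (by omega),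
      if_pos (by omega), if_pos (by omega)]
  push_cast; ring

/-- vertex 0 : tail alternating sum -/
lemma gs0 : ∑ t ∈ Finset.range (4*k+1), (CC k 0 t : ℂ) * X t
    = ∑ t ∈ Finset.Ico (2*k) (4*k+1), (-1 : ℂ)^t * X t := by
  have hsub : Finset.Ico (2*k) (4*k+1) ⊆ Finset.range (4*k+1) := by
    intro x hx; rw [Finset.mem_Ico] at hx; rw [Finset.mem_range]; omega
  have hz : ∀ x ∈ Finset.range (4*k+1), x ∉ Finset.Ico (2*k) (4*k+1) →
      (CC k 0 x : ℂ) * X x = 0 := by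
    intro x hx hx2
    rw [Finset.mem_range] at hx
    rw [Finset.mem_Ico] at hx2
    unfold CC
    rw [if_pos rfl, if_neg (by omega)]
    push_cast; ring
  rw [← Finset.sum_subset hsub hz]
  apply Finset.sum_congr rfl
  intro x hx
  rw [Finset.mem_Ico] at hx
  unfold CC
  rw [if_pos rfl, if_pos (by omega)]
  push_cast; ring

/-- vertex 1 : head alternating sum -/
lemma gs1 : ∑ t ∈ Finset.range (4*k+1), (CC k 1 t : ℂ) * X t
    = ∑ t ∈ Finset.Ico 0 (2*k+1), (-1 : ℂ)^t * X t := by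
  have hsub : Finset.Ico 0 (2*k+1) ⊆ Finset.range (4*k+1) := by
    intro x hx; rw [Finset.mem_Ico] at hx; rw [Finset.mem_range]; omega
  have hz : ∀ x ∈ Finset.range (4*k+1), x ∉ Finset.Ico 0 (2*k+1) →
      (CC k 1 x : ℂ) * X x = 0 := by
    intro x hx hx2
    rw [Finset.mem_range] at hx
    rw [Finset.mem_Ico] at hx2
    unfold CC
    rw [if_neg (by omega), if_pos rfl, if_neg (by omega)]
    push_cast; ring
  rw [← Finset.sum_subset hsub hz]
  apply Finset.sum_congr rfl
  intro x hx
  rw [Finset.mem_Ico] at hx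
  unfold CC
  rw [if_neg (by omega), if_pos rfl, if_pos (by omega)]
  push_cast; ring

end GS


lemma const_seg (y : ℕ → ℂ) (a : ℕ) (h : ∀ t, a ≤ t → y t = y (t+1)) :
    ∀ t, a ≤ t → y t = y a := by
  intro t ht
  induction t, ht using Nat.le_induction with
  | base => rfl
  | succ n hn ih => rw [← h n hn]; exact ih

/-- y constant = y a on [a, b] given links strictly below b -/
lemma const_seg' (y : ℕ → ℂ) (a b : ℕ) (h : ∀ t, a ≤ t → t < b → y t = y (t+1)) :
    ∀ t, a ≤ t → t ≤ b → y t = y a := by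
  intro t ha hb
  induction t, ha using Nat.le_induction with
  | base => rfl
  | succ n hn ih => rw [← h n hn (by omega)]; exact ih (by omega)

lemma sum_Ico_of_const (y : ℕ → ℂ) (γ : ℂ) (u v : ℕ) (h : ∀ t, u ≤ t → t < v → y t = γ) :
    ∑ t ∈ Finset.Ico u v, y t = ((v - u : ℕ) : ℂ) * γ := by
  have h2 : ∑ t ∈ Finset.Ico u v, y t = ∑ _t ∈ Finset.Ico u v, γ :=
    Finset.sum_congr rfl (fun t ht => by rw [Finset.mem_Ico] at ht; exact h t ht.1 ht.2)
  rw [h2, Finset.sum_const, Nat.card_Ico, nsmul_eq_mul]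

lemma factor_zero (n : ℕ) (γ : ℂ) (hn : n ≠ 0) (h : ((n:ℕ):ℂ) * γ = 0) : γ = 0 := by
  have : ((n:ℕ):ℂ) ≠ 0 := Nat.cast_ne_zero.mpr hn
  exact (mul_eq_zero.mp h).resolve_left this



namespace M
-- context for master lemmas
variable (k : ℕ) (y : ℕ → ℂ)

/-- all-links ⇒ zero from left ground -/
lemma allzero_left (h0 : y 0 = 0) (hL : ∀ t, t < 4*k → y t = y (t+1)) :
    ∀ t, t ≤ 4*k → y t = 0 := by
  intro t ht
  rw [const_seg' y 0 (4*k) (fun s h1 h2 => hL s h2) t (by omega) ht, h0]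

end M

section Mpair
variable (k i j : ℕ) (y : ℕ → ℂ)

/-- master lemma, case: deletions {i, j} (two singleton classes) -/
lemma masterPair (hk : 1 ≤ k) (hij : i ≤ j) (hj4 : j ≤ 4*k+3)
    (hG0 : 2 ≠ i → 2 ≠ j → y 0 = 0)
    (hGn : 4*k+3 ≠ i → 4*k+3 ≠ j → y (4*k) = 0)
    (hL : ∀ t, t < 4*k → t+3 ≠ i → t+3 ≠ j → y t = y (t+1))
    (hS1 : 1 ≠ i → 1 ≠ j → ∑ t ∈ Finset.Ico 0 (2*k+1), y t = 0)
    (hS0 : 0 ≠ i → 0 ≠ j → ∑ t ∈ Finset.Ico (2*k) (4*k+1), y t = 0) :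
    ∀ t, t ≤ 4*k → y t = 0 := by
  -- case on j
  by_cases hj1 : j ≤ 1
  · exact M.allzero_left k y (hG0 (by omega) (by omega))
      (fun t ht => hL t ht (by omega) (by omega))
  by_cases hi1 : i ≤ 1
  · -- i ∈ {0,1}, j ≥ 2 : only cut is from j ; no sums needed
    by_cases hj2 : j = 2
    · -- right-ground, all links
      subst hj2
      have hc := const_seg' y 0 (4*k) (fun t h1 h2 => hL t h2 (by omega) (by omega))
      have h0 : y 0 = 0 := by
        rw [← hc (4*k) (by omega) le_rfl]; exact hGn (by omega) (by omega)
      intro t ht; rw [hc t (by omega) ht, h0]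
    by_cases hj3 : j = 4*k+3
    · subst hj3
      exact M.allzero_left k y (hG0 (by omega) (by omega))
        (fun t ht => hL t ht (by omega) (by omega))
    · -- 3 ≤ j ≤ 4k+2
      have hzl : ∀ t, t ≤ j-3 → y t = 0 := by
        intro t ht
        rw [const_seg' y 0 (j-3) (fun s h1 h2 => hL s (by omega) (by omega) (by omega)) t (by omega) ht,
            hG0 (by omega) (by omega)]
      have hcr := const_seg' y (j-2) (4*k) (fun s h1 h2 => hL s (by omega) (by omega) (by omega))
      have hr0 : y (j-2) = 0 :=
        (hcr (4*k) (by omega) le_rfl).symm.trans (hGn (by omega) (by omega))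
      intro t ht
      rcases Nat.lt_or_ge t (j-2) with h | h
      · exact hzl t (by omega)
      · rw [hcr t h ht, hr0]
  -- now 2 ≤ i ≤ j
  by_cases hi2 : i = 2
  · subst hi2
    by_cases hj2 : j = 2
    · subst hj2
      have hc := const_seg' y 0 (4*k) (fun t h1 h2 => hL t h2 (by omega) (by omega))
      have h0 : y 0 = 0 := by
        rw [← hc (4*k) (by omega) le_rfl]; exact hGn (by omega) (by omega)
      intro t ht; rw [hc t (by omega) ht, h0]
    by_cases hj3 : j = 4*k+3
    · -- i=2, j=4k+3 : const everywhere, S1 kills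
      subst hj3
      have hc := const_seg' y 0 (4*k) (fun t h1 h2 => hL t h2 (by omega) (by omega))
      have hsum := hS1 (by omega) (by omega)
      rw [sum_Ico_of_const y (y 0) 0 (2*k+1) (fun t h1 h2 => hc t (by omega) (by omega))] at hsum
      have h0 : y 0 = 0 := factor_zero (2*k+1) (y 0) (by omega) (by simpa using hsum)
      intro t ht; rw [hc t (by omega) ht, h0]
    · -- i=2, 3 ≤ j ≤ 4k+2 : α on [0, j-3], zero on [j-2, 4k]
      have hca := const_seg' y 0 (j-3) (fun s h1 h2 => hL s (by omega) (by omega) (by omega))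
      have hcr := const_seg' y (j-2) (4*k) (fun s h1 h2 => hL s (by omega) (by omega) (by omega))
      have hr0 : y (j-2) = 0 :=
        (hcr (4*k) (by omega) le_rfl).symm.trans (hGn (by omega) (by omega))
      have hzr : ∀ t, j-2 ≤ t → t ≤ 4*k → y t = 0 := fun t h1 h2 => by
        rw [hcr t h1 h2, hr0]
      have hsum := hS1 (by omega) (by omega)
      have h0 : y 0 = 0 := by
        rcases Nat.lt_or_ge (j-3) (2*k) with hc1 | hc1
        · -- split at j-2
          rw [← Finset.sum_Ico_consecutive y (by omega : 0 ≤ j-2) (by omega : j-2 ≤ 2*k+1)] at hsum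
          rw [sum_Ico_of_const y (y 0) 0 (j-2) (fun t h1 h2 => hca t (by omega) (by omega)),
              sum_Ico_of_const y 0 (j-2) (2*k+1) (fun t h1 h2 => hzr t (by omega) (by omega)),
              mul_zero, add_zero] at hsum
          exact factor_zero (j-2) (y 0) (by omega) (by simpa using hsum)
        · rw [sum_Ico_of_const y (y 0) 0 (2*k+1) (fun t h1 h2 => hca t (by omega) (by omega))] at hsum
          exact factor_zero (2*k+1) (y 0) (by omega) (by simpa using hsum)
      intro t ht
      rcases Nat.lt_or_ge t (j-2) with h | h
      · rw [hca t (by omega) (by omega), h0]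
      · exact hzr t h ht
  · -- 3 ≤ i ≤ j
    by_cases hd : i = j
    · subst hd
      by_cases hj3 : i = 4*k+3
      · subst hj3
        exact M.allzero_left k y (hG0 (by omega) (by omega))
          (fun t ht => hL t ht (by omega) (by omega))
      · -- single interior cut
        have hzl : ∀ t, t ≤ i-3 → y t = 0 := by
          intro t ht
          rw [const_seg' y 0 (i-3) (fun s h1 h2 => hL s (by omega) (by omega) (by omega)) t (by omega) ht,
              hG0 (by omega) (by omega)]
        have hcr := const_seg' y (i-2) (4*k) (fun s h1 h2 => hL s (by omega) (by omega) (by omega))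
        have hr0 : y (i-2) = 0 :=
          (hcr (4*k) (by omega) le_rfl).symm.trans (hGn (by omega) (by omega))
        intro t ht
        rcases Nat.lt_or_ge t (i-2) with h | h
        · exact hzl t (by omega)
        · rw [hcr t h ht, hr0]
    -- 3 ≤ i < j
    have hzl : ∀ t, t ≤ i-3 → y t = 0 := by
      intro t ht
      rw [const_seg' y 0 (i-3) (fun s h1 h2 => hL s (by omega) (by omega) (by omega)) t (by omega) ht,
          hG0 (by omega) (by omega)]
    by_cases hj3 : j = 4*k+3
    · -- cut at i, right ground gone; α on [i-2, 4k]; use S0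
      subst hj3
      have hca := const_seg' y (i-2) (4*k) (fun s h1 h2 => hL s (by omega) (by omega) (by omega))
      have hsum := hS0 (by omega) (by omega)
      have ha0 : y (i-2) = 0 := by
        rcases Nat.lt_or_ge (2*k) (i-2) with hc1 | hc1
        · rw [← Finset.sum_Ico_consecutive y (by omega : 2*k ≤ i-2) (by omega : i-2 ≤ 4*k+1),
              sum_Ico_of_const y 0 (2*k) (i-2) (fun t h1 h2 => hzl t (by omega)),
              sum_Ico_of_const y (y (i-2)) (i-2) (4*k+1) (fun t h1 h2 => hca t (by omega) (by omega)),
              mul_zero, zero_add] at hsum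
          exact factor_zero (4*k+1-(i-2)) _ (by omega) (by simpa using hsum)
        · rw [sum_Ico_of_const y (y (i-2)) (2*k) (4*k+1) (fun t h1 h2 => hca t (by omega) (by omega))] at hsum
          exact factor_zero (4*k+1-2*k) _ (by omega) (by simpa using hsum)
      intro t ht
      rcases Nat.lt_or_ge t (i-2) with h | h
      · exact hzl t (by omega)
      · rw [hca t h ht, ha0]
    · -- 3 ≤ i < j ≤ 4k+2 : cuts i-3 < j-3, mid α on [i-2, j-3], right zero [j-2,4k]
      have hca := const_seg' y (i-2) (j-3) (fun s h1 h2 => hL s (by omega) (by omega) (by omega))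
      have hcr := const_seg' y (j-2) (4*k) (fun s h1 h2 => hL s (by omega) (by omega) (by omega))
      have hr0 : y (j-2) = 0 :=
        (hcr (4*k) (by omega) le_rfl).symm.trans (hGn (by omega) (by omega))
      have hzr : ∀ t, j-2 ≤ t → t ≤ 4*k → y t = 0 := fun t h1 h2 => by
        rw [hcr t h1 h2, hr0]
      have ha0 : y (i-2) = 0 := by
        rcases Nat.lt_or_ge (2*k) (i-2) with hc1 | hc1
        · -- mid in tail: use S0, split at i-2 and j-2
          have hsum := hS0 (by omega) (by omega)
          rw [← Finset.sum_Ico_consecutive y (by omega : 2*k ≤ i-2) (by omega : i-2 ≤ 4*k+1),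
              ← Finset.sum_Ico_consecutive y (by omega : i-2 ≤ j-2) (by omega : j-2 ≤ 4*k+1),
              sum_Ico_of_const y 0 (2*k) (i-2) (fun t h1 h2 => hzl t (by omega)),
              sum_Ico_of_const y (y (i-2)) (i-2) (j-2) (fun t h1 h2 => hca t (by omega) (by omega)),
              sum_Ico_of_const y 0 (j-2) (4*k+1) (fun t h1 h2 => hzr t (by omega) (by omega)),
              mul_zero, zero_add, mul_zero, add_zero] at hsum
          exact factor_zero (j-2-(i-2)) _ (by omega) (by simpa using hsum)
        · -- mid starts in head: use S1
          have hsum := hS1 (by omega) (by omega)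
          rcases Nat.lt_or_ge (j-3) (2*k+1) with hc2 | hc2
          · rw [← Finset.sum_Ico_consecutive y (by omega : 0 ≤ i-2) (by omega : i-2 ≤ 2*k+1),
                ← Finset.sum_Ico_consecutive y (by omega : i-2 ≤ j-2) (by omega : j-2 ≤ 2*k+1),
                sum_Ico_of_const y 0 0 (i-2) (fun t h1 h2 => hzl t (by omega)),
                sum_Ico_of_const y (y (i-2)) (i-2) (j-2) (fun t h1 h2 => hca t (by omega) (by omega)),
                sum_Ico_of_const y 0 (j-2) (2*k+1) (fun t h1 h2 => hzr t (by omega) (by omega)),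
                mul_zero, zero_add, mul_zero, add_zero] at hsum
            exact factor_zero (j-2-(i-2)) _ (by omega) (by simpa using hsum)
          · rw [← Finset.sum_Ico_consecutive y (by omega : 0 ≤ i-2) (by omega : i-2 ≤ 2*k+1),
                sum_Ico_of_const y 0 0 (i-2) (fun t h1 h2 => hzl t (by omega)),
                sum_Ico_of_const y (y (i-2)) (i-2) (2*k+1) (fun t h1 h2 => hca t (by omega) (by omega)),
                mul_zero, zero_add] at hsum
            exact factor_zero (2*k+1-(i-2)) _ (by omega) (by simpa using hsum)
      intro t ht
      rcases Nat.lt_or_ge t (i-2) with h | h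
      · exact hzl t (by omega)
      · rcases Nat.lt_or_ge t (j-2) with h2 | h2
        · rw [hca t h (by omega), ha0]
        · exact hzr t h2 ht

end Mpair


section MQ
variable (k i : ℕ) (y : ℕ → ℂ)

/-- master, deletions {i, 0, 2k+1} -/
lemma masterQ1 (hk : 1 ≤ k) (hi4 : i ≤ 4*k+3)
    (hG0 : 2 ≠ i → y 0 = 0)
    (hGn : 4*k+3 ≠ i → y (4*k) = 0)
    (hL : ∀ t, t < 4*k → t+3 ≠ i → t+3 ≠ 2*k+1 → y t = y (t+1))
    (hS1 : 1 ≠ i → ∑ t ∈ Finset.Ico 0 (2*k+1), y t = 0) :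
    ∀ t, t ≤ 4*k → y t = 0 := by
  by_cases hA : i ≤ 1 ∨ i = 2*k+1
  · have hzl : ∀ t, t ≤ 2*k-2 → y t = 0 := by
      intro t ht
      rw [const_seg' y 0 (2*k-2) (fun s h1 h2 => hL s (by omega) (by omega) (by omega)) t (by omega) ht,
          hG0 (by omega)]
    have hcr := const_seg' y (2*k-1) (4*k) (fun s h1 h2 => hL s (by omega) (by omega) (by omega))
    have hr0 : y (2*k-1) = 0 := (hcr (4*k) (by omega) le_rfl).symm.trans (hGn (by omega))
    intro t ht
    rcases Nat.lt_or_ge t (2*k-1) with h | h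
    · exact hzl t (by omega)
    · rw [hcr t h ht, hr0]
  push_neg at hA
  obtain ⟨hA1, hA2⟩ := hA
  by_cases hB : i = 2
  · subst hB
    have hca := const_seg' y 0 (2*k-2) (fun s h1 h2 => hL s (by omega) (by omega) (by omega))
    have hcr := const_seg' y (2*k-1) (4*k) (fun s h1 h2 => hL s (by omega) (by omega) (by omega))
    have hr0 : y (2*k-1) = 0 := (hcr (4*k) (by omega) le_rfl).symm.trans (hGn (by omega))
    have hzr : ∀ t, 2*k-1 ≤ t → t ≤ 4*k → y t = 0 := fun t h1 h2 => by rw [hcr t h1 h2, hr0]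
    have hsum := hS1 (by omega)
    rw [← Finset.sum_Ico_consecutive y (by omega : 0 ≤ 2*k-1) (by omega : 2*k-1 ≤ 2*k+1),
        sum_Ico_of_const y (y 0) 0 (2*k-1) (fun t h1 h2 => hca t (by omega) (by omega)),
        sum_Ico_of_const y 0 (2*k-1) (2*k+1) (fun t h1 h2 => hzr t (by omega) (by omega)),
        mul_zero, add_zero] at hsum
    have h0 : y 0 = 0 := factor_zero (2*k-1) _ (by omega) (by simpa using hsum)
    intro t ht
    rcases Nat.lt_or_ge t (2*k-1) with h | h
    · rw [hca t (by omega) (by omega), h0]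
    · exact hzr t h ht
  by_cases hC : i = 4*k+3
  · subst hC
    have hzl : ∀ t, t ≤ 2*k-2 → y t = 0 := by
      intro t ht
      rw [const_seg' y 0 (2*k-2) (fun s h1 h2 => hL s (by omega) (by omega) (by omega)) t (by omega) ht,
          hG0 (by omega)]
    have hca := const_seg' y (2*k-1) (4*k) (fun s h1 h2 => hL s (by omega) (by omega) (by omega))
    have hsum := hS1 (by omega)
    rw [← Finset.sum_Ico_consecutive y (by omega : 0 ≤ 2*k-1) (by omega : 2*k-1 ≤ 2*k+1),
        sum_Ico_of_const y 0 0 (2*k-1) (fun t h1 h2 => hzl t (by omega)),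
        sum_Ico_of_const y (y (2*k-1)) (2*k-1) (2*k+1) (fun t h1 h2 => hca t (by omega) (by omega)),
        mul_zero, zero_add] at hsum
    have ha0 : y (2*k-1) = 0 := factor_zero (2*k+1-(2*k-1)) _ (by omega) (by simpa using hsum)
    intro t ht
    rcases Nat.lt_or_ge t (2*k-1) with h | h
    · exact hzl t (by omega)
    · rw [hca t h ht, ha0]
  · -- 3 ≤ i ≤ 4k+2, i ≠ 2k+1
    rcases Nat.lt_or_ge i (2*k+1) with hcase | hcase
    · -- i < 2k+1 : cuts i-3 < 2k-2
      have hzl : ∀ t, t ≤ i-3 → y t = 0 := by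
        intro t ht
        rw [const_seg' y 0 (i-3) (fun s h1 h2 => hL s (by omega) (by omega) (by omega)) t (by omega) ht,
            hG0 (by omega)]
      have hca := const_seg' y (i-2) (2*k-2) (fun s h1 h2 => hL s (by omega) (by omega) (by omega))
      have hcr := const_seg' y (2*k-1) (4*k) (fun s h1 h2 => hL s (by omega) (by omega) (by omega))
      have hr0 : y (2*k-1) = 0 := (hcr (4*k) (by omega) le_rfl).symm.trans (hGn (by omega))
      have hzr : ∀ t, 2*k-1 ≤ t → t ≤ 4*k → y t = 0 := fun t h1 h2 => by rw [hcr t h1 h2, hr0]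
      have hsum := hS1 (by omega)
      rw [← Finset.sum_Ico_consecutive y (by omega : 0 ≤ i-2) (by omega : i-2 ≤ 2*k+1),
          ← Finset.sum_Ico_consecutive y (by omega : i-2 ≤ 2*k-1) (by omega : 2*k-1 ≤ 2*k+1),
          sum_Ico_of_const y 0 0 (i-2) (fun t h1 h2 => hzl t (by omega)),
          sum_Ico_of_const y (y (i-2)) (i-2) (2*k-1) (fun t h1 h2 => hca t (by omega) (by omega)),
          sum_Ico_of_const y 0 (2*k-1) (2*k+1) (fun t h1 h2 => hzr t (by omega) (by omega)),
          mul_zero, zero_add, mul_zero, add_zero] at hsum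
      have ha0 : y (i-2) = 0 := factor_zero (2*k-1-(i-2)) _ (by omega) (by simpa using hsum)
      intro t ht
      rcases Nat.lt_or_ge t (i-2) with h | h
      · exact hzl t (by omega)
      · rcases Nat.lt_or_ge t (2*k-1) with h2 | h2
        · rw [hca t h (by omega), ha0]
        · exact hzr t h2 ht
    · -- i > 2k+1 : cuts 2k-2 < i-3
      have hzl : ∀ t, t ≤ 2*k-2 → y t = 0 := by
        intro t ht
        rw [const_seg' y 0 (2*k-2) (fun s h1 h2 => hL s (by omega) (by omega) (by omega)) t (by omega) ht,
            hG0 (by omega)]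
      have hca := const_seg' y (2*k-1) (i-3) (fun s h1 h2 => hL s (by omega) (by omega) (by omega))
      have hcr := const_seg' y (i-2) (4*k) (fun s h1 h2 => hL s (by omega) (by omega) (by omega))
      have hr0 : y (i-2) = 0 := (hcr (4*k) (by omega) le_rfl).symm.trans (hGn (by omega))
      have hzr : ∀ t, i-2 ≤ t → t ≤ 4*k → y t = 0 := fun t h1 h2 => by rw [hcr t h1 h2, hr0]
      have hsum := hS1 (by omega)
      have ha0 : y (2*k-1) = 0 := by
        by_cases hi22 : i = 2*k+2
        · rw [← Finset.sum_Ico_consecutive y (by omega : 0 ≤ 2*k-1) (by omega : 2*k-1 ≤ 2*k+1),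
              ← Finset.sum_Ico_consecutive y (by omega : 2*k-1 ≤ 2*k) (by omega : 2*k ≤ 2*k+1),
              sum_Ico_of_const y 0 0 (2*k-1) (fun t h1 h2 => hzl t (by omega)),
              sum_Ico_of_const y (y (2*k-1)) (2*k-1) (2*k) (fun t h1 h2 => hca t (by omega) (by omega)),
              sum_Ico_of_const y 0 (2*k) (2*k+1) (fun t h1 h2 => hzr t (by omega) (by omega)),
              mul_zero, zero_add, mul_zero, add_zero] at hsum
          exact factor_zero (2*k-(2*k-1)) _ (by omega) (by simpa using hsum)
        · rw [← Finset.sum_Ico_consecutive y (by omega : 0 ≤ 2*k-1) (by omega : 2*k-1 ≤ 2*k+1),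
              sum_Ico_of_const y 0 0 (2*k-1) (fun t h1 h2 => hzl t (by omega)),
              sum_Ico_of_const y (y (2*k-1)) (2*k-1) (2*k+1) (fun t h1 h2 => hca t (by omega) (by omega)),
              mul_zero, zero_add] at hsum
          exact factor_zero (2*k+1-(2*k-1)) _ (by omega) (by simpa using hsum)
      intro t ht
      rcases Nat.lt_or_ge t (2*k-1) with h | h
      · exact hzl t (by omega)
      · rcases Nat.lt_or_ge t (i-2) with h2 | h2
        · rw [hca t h (by omega), ha0]
        · exact hzr t h2 ht

/-- master, deletions {i, 1, 2k+4} -/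
lemma masterQ2 (hk : 1 ≤ k) (hi4 : i ≤ 4*k+3)
    (hG0 : 2 ≠ i → y 0 = 0)
    (hGn : 4*k+3 ≠ i → y (4*k) = 0)
    (hL : ∀ t, t < 4*k → t+3 ≠ i → t+3 ≠ 2*k+4 → y t = y (t+1))
    (hS0 : 0 ≠ i → ∑ t ∈ Finset.Ico (2*k) (4*k+1), y t = 0) :
    ∀ t, t ≤ 4*k → y t = 0 := by
  by_cases hA : i ≤ 1 ∨ i = 2*k+4
  · have hzl : ∀ t, t ≤ 2*k+1 → y t = 0 := by
      intro t ht
      rw [const_seg' y 0 (2*k+1) (fun s h1 h2 => hL s (by omega) (by omega) (by omega)) t (by omega) ht,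
          hG0 (by omega)]
    have hcr := const_seg' y (2*k+2) (4*k) (fun s h1 h2 => hL s (by omega) (by omega) (by omega))
    have hr0 : y (2*k+2) = 0 := (hcr (4*k) (by omega) le_rfl).symm.trans (hGn (by omega))
    intro t ht
    rcases Nat.lt_or_ge t (2*k+2) with h | h
    · exact hzl t (by omega)
    · rw [hcr t h ht, hr0]
  push_neg at hA
  obtain ⟨hA1, hA2⟩ := hA
  by_cases hB : i = 2
  · subst hB
    have hca := const_seg' y 0 (2*k+1) (fun s h1 h2 => hL s (by omega) (by omega) (by omega))
    have hcr := const_seg' y (2*k+2) (4*k) (fun s h1 h2 => hL s (by omega) (by omega) (by omega))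
    have hr0 : y (2*k+2) = 0 := (hcr (4*k) (by omega) le_rfl).symm.trans (hGn (by omega))
    have hzr : ∀ t, 2*k+2 ≤ t → t ≤ 4*k → y t = 0 := fun t h1 h2 => by rw [hcr t h1 h2, hr0]
    have hsum := hS0 (by omega)
    rw [← Finset.sum_Ico_consecutive y (by omega : 2*k ≤ 2*k+2) (by omega : 2*k+2 ≤ 4*k+1),
        sum_Ico_of_const y (y 0) (2*k) (2*k+2) (fun t h1 h2 => hca t (by omega) (by omega)),
        sum_Ico_of_const y 0 (2*k+2) (4*k+1) (fun t h1 h2 => hzr t (by omega) (by omega)),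
        mul_zero, add_zero] at hsum
    have h0 : y 0 = 0 := factor_zero (2*k+2-2*k) _ (by omega) (by simpa using hsum)
    intro t ht
    rcases Nat.lt_or_ge t (2*k+2) with h | h
    · rw [hca t (by omega) (by omega), h0]
    · exact hzr t h ht
  by_cases hC : i = 4*k+3
  · subst hC
    have hzl : ∀ t, t ≤ 2*k+1 → y t = 0 := by
      intro t ht
      rw [const_seg' y 0 (2*k+1) (fun s h1 h2 => hL s (by omega) (by omega) (by omega)) t (by omega) ht,
          hG0 (by omega)]
    have hca := const_seg' y (2*k+2) (4*k) (fun s h1 h2 => hL s (by omega) (by omega) (by omega))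
    have hsum := hS0 (by omega)
    rw [← Finset.sum_Ico_consecutive y (by omega : 2*k ≤ 2*k+2) (by omega : 2*k+2 ≤ 4*k+1),
        sum_Ico_of_const y 0 (2*k) (2*k+2) (fun t h1 h2 => hzl t (by omega)),
        sum_Ico_of_const y (y (2*k+2)) (2*k+2) (4*k+1) (fun t h1 h2 => hca t (by omega) (by omega)),
        mul_zero, zero_add] at hsum
    have ha0 : y (2*k+2) = 0 := factor_zero (4*k+1-(2*k+2)) _ (by omega) (by simpa using hsum)
    intro t ht
    rcases Nat.lt_or_ge t (2*k+2) with h | h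
    · exact hzl t (by omega)
    · rw [hca t h ht, ha0]
  · -- 3 ≤ i ≤ 4k+2, i ≠ 2k+4
    rcases Nat.lt_or_ge i (2*k+4) with hcase | hcase
    · -- i < 2k+4 : cuts i-3 < 2k+1
      have hzl : ∀ t, t ≤ i-3 → y t = 0 := by
        intro t ht
        rw [const_seg' y 0 (i-3) (fun s h1 h2 => hL s (by omega) (by omega) (by omega)) t (by omega) ht,
            hG0 (by omega)]
      have hca := const_seg' y (i-2) (2*k+1) (fun s h1 h2 => hL s (by omega) (by omega) (by omega))
      have hcr := const_seg' y (2*k+2) (4*k) (fun s h1 h2 => hL s (by omega) (by omega) (by omega))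
      have hr0 : y (2*k+2) = 0 := (hcr (4*k) (by omega) le_rfl).symm.trans (hGn (by omega))
      have hzr : ∀ t, 2*k+2 ≤ t → t ≤ 4*k → y t = 0 := fun t h1 h2 => by rw [hcr t h1 h2, hr0]
      have hsum := hS0 (by omega)
      have ha0 : y (i-2) = 0 := by
        rcases Nat.lt_or_ge (i-2) (2*k+1) with hi2 | hi2
        · -- i ≤ 2k+2 : mid covers [2k, 2k+1]
          rw [← Finset.sum_Ico_consecutive y (by omega : 2*k ≤ 2*k+2) (by omega : 2*k+2 ≤ 4*k+1),
              sum_Ico_of_const y (y (i-2)) (2*k) (2*k+2) (fun t h1 h2 => hca t (by omega) (by omega)),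
              sum_Ico_of_const y 0 (2*k+2) (4*k+1) (fun t h1 h2 => hzr t (by omega) (by omega)),
              mul_zero, add_zero] at hsum
          exact factor_zero (2*k+2-2*k) _ (by omega) (by simpa using hsum)
        · -- i = 2k+3 : mid = {2k+1}
          rw [← Finset.sum_Ico_consecutive y (by omega : 2*k ≤ 2*k+1) (by omega : 2*k+1 ≤ 4*k+1),
              ← Finset.sum_Ico_consecutive y (by omega : 2*k+1 ≤ 2*k+2) (by omega : 2*k+2 ≤ 4*k+1),
              sum_Ico_of_const y 0 (2*k) (2*k+1) (fun t h1 h2 => hzl t (by omega)),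
              sum_Ico_of_const y (y (i-2)) (2*k+1) (2*k+2) (fun t h1 h2 => hca t (by omega) (by omega)),
              sum_Ico_of_const y 0 (2*k+2) (4*k+1) (fun t h1 h2 => hzr t (by omega) (by omega)),
              mul_zero, zero_add, mul_zero, add_zero] at hsum
          exact factor_zero (2*k+2-(2*k+1)) _ (by omega) (by simpa using hsum)
      intro t ht
      rcases Nat.lt_or_ge t (i-2) with h | h
      · exact hzl t (by omega)
      · rcases Nat.lt_or_ge t (2*k+2) with h2 | h2
        · rw [hca t h (by omega), ha0]
        · exact hzr t h2 ht
    · -- i > 2k+4 : cuts 2k+1 < i-3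
      have hzl : ∀ t, t ≤ 2*k+1 → y t = 0 := by
        intro t ht
        rw [const_seg' y 0 (2*k+1) (fun s h1 h2 => hL s (by omega) (by omega) (by omega)) t (by omega) ht,
            hG0 (by omega)]
      have hca := const_seg' y (2*k+2) (i-3) (fun s h1 h2 => hL s (by omega) (by omega) (by omega))
      have hcr := const_seg' y (i-2) (4*k) (fun s h1 h2 => hL s (by omega) (by omega) (by omega))
      have hr0 : y (i-2) = 0 := (hcr (4*k) (by omega) le_rfl).symm.trans (hGn (by omega))
      have hzr : ∀ t, i-2 ≤ t → t ≤ 4*k → y t = 0 := fun t h1 h2 => by rw [hcr t h1 h2, hr0]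
      have hsum := hS0 (by omega)
      rw [← Finset.sum_Ico_consecutive y (by omega : 2*k ≤ 2*k+2) (by omega : 2*k+2 ≤ 4*k+1),
          ← Finset.sum_Ico_consecutive y (by omega : 2*k+2 ≤ i-2) (by omega : i-2 ≤ 4*k+1),
          sum_Ico_of_const y 0 (2*k) (2*k+2) (fun t h1 h2 => hzl t (by omega)),
          sum_Ico_of_const y (y (2*k+2)) (2*k+2) (i-2) (fun t h1 h2 => hca t (by omega) (by omega)),
          sum_Ico_of_const y 0 (i-2) (4*k+1) (fun t h1 h2 => hzr t (by omega) (by omega)),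
          mul_zero, zero_add, mul_zero, add_zero] at hsum
      have ha0 : y (2*k+2) = 0 := factor_zero (i-2-(2*k+2)) _ (by omega) (by simpa using hsum)
      intro t ht
      rcases Nat.lt_or_ge t (2*k+2) with h | h
      · exact hzl t (by omega)
      · rcases Nat.lt_or_ge t (i-2) with h2 | h2
        · rw [hca t h (by omega), ha0]
        · exact hzr t h2 ht

/-- master, deletions {i, 2, 2k+3} ; note left ground is always absent -/
lemma masterQ3 (hk : 1 ≤ k) (hi4 : i ≤ 4*k+3)
    (hGn : 4*k+3 ≠ i → y (4*k) = 0)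
    (hL : ∀ t, t < 4*k → t+3 ≠ i → t+3 ≠ 2*k+3 → y t = y (t+1))
    (hS1 : 1 ≠ i → ∑ t ∈ Finset.Ico 0 (2*k+1), y t = 0)
    (hS0 : 0 ≠ i → ∑ t ∈ Finset.Ico (2*k) (4*k+1), y t = 0) :
    ∀ t, t ≤ 4*k → y t = 0 := by
  -- cut from vertex 2k+3 is at link t = 2k : segments [0,2k] and [2k+1, 4k]
  by_cases hC : i ≤ 2 ∨ i = 2*k+3
  · -- single α segment [0, 2k], right side zero (ground present)
    have hca := const_seg' y 0 (2*k) (fun s h1 h2 => hL s (by omega) (by omega) (by omega))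
    have hcr := const_seg' y (2*k+1) (4*k) (fun s h1 h2 => hL s (by omega) (by omega) (by omega))
    have hr0 : y (2*k+1) = 0 := (hcr (4*k) (by omega) le_rfl).symm.trans (hGn (by omega))
    have hzr : ∀ t, 2*k+1 ≤ t → t ≤ 4*k → y t = 0 := fun t h1 h2 => by rw [hcr t h1 h2, hr0]
    have h0 : y 0 = 0 := by
      by_cases h1i : i = 1
      · -- use S0 : picks up y 2k = y 0
        subst h1i
        have hsum := hS0 (by omega)
        rw [← Finset.sum_Ico_consecutive y (by omega : 2*k ≤ 2*k+1) (by omega : 2*k+1 ≤ 4*k+1),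
            sum_Ico_of_const y (y 0) (2*k) (2*k+1) (fun t h1 h2 => hca t (by omega) (by omega)),
            sum_Ico_of_const y 0 (2*k+1) (4*k+1) (fun t h1 h2 => hzr t (by omega) (by omega)),
            mul_zero, add_zero] at hsum
        exact factor_zero (2*k+1-2*k) _ (by omega) (by simpa using hsum)
      · have hsum := hS1 (fun h => h1i h.symm)
        rw [sum_Ico_of_const y (y 0) 0 (2*k+1) (fun t h1 h2 => hca t (by omega) (by omega))] at hsum
        exact factor_zero (2*k+1) _ (by omega) (by simpa using hsum)
    intro t ht
    rcases Nat.lt_or_ge t (2*k+1) with h | h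
    · rw [hca t (by omega) (by omega), h0]
    · exact hzr t h ht
  push_neg at hC
  obtain ⟨hC1, hC2⟩ := hC
  by_cases hD : i = 4*k+3
  · subst hD
    have hca := const_seg' y 0 (2*k) (fun s h1 h2 => hL s (by omega) (by omega) (by omega))
    have hcb := const_seg' y (2*k+1) (4*k) (fun s h1 h2 => hL s (by omega) (by omega) (by omega))
    have h0 : y 0 = 0 := by
      have hsum := hS1 (by omega)
      rw [sum_Ico_of_const y (y 0) 0 (2*k+1) (fun t h1 h2 => hca t (by omega) (by omega))] at hsum
      exact factor_zero (2*k+1) _ (by omega) (by simpa using hsum)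
    have hza : ∀ t, t ≤ 2*k → y t = 0 := fun t ht => by rw [hca t (by omega) ht, h0]
    have hb0 : y (2*k+1) = 0 := by
      have hsum := hS0 (by omega)
      rw [← Finset.sum_Ico_consecutive y (by omega : 2*k ≤ 2*k+1) (by omega : 2*k+1 ≤ 4*k+1),
          sum_Ico_of_const y 0 (2*k) (2*k+1) (fun t h1 h2 => hza t (by omega)),
          sum_Ico_of_const y (y (2*k+1)) (2*k+1) (4*k+1) (fun t h1 h2 => hcb t (by omega) (by omega)),
          mul_zero, zero_add] at hsum
      exact factor_zero (4*k+1-(2*k+1)) _ (by omega) (by simpa using hsum)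
    intro t ht
    rcases Nat.lt_or_ge t (2*k+1) with h | h
    · exact hza t (by omega)
    · rw [hcb t h ht, hb0]
  · -- 3 ≤ i ≤ 4k+2, i ≠ 2k+3
    rcases Nat.lt_or_ge i (2*k+3) with hcase | hcase
    · -- i ≤ 2k+2 : α on [0, i-3], β on [i-2, 2k], zero on [2k+1, 4k]
      have hca := const_seg' y 0 (i-3) (fun s h1 h2 => hL s (by omega) (by omega) (by omega))
      have hcb := const_seg' y (i-2) (2*k) (fun s h1 h2 => hL s (by omega) (by omega) (by omega))
      have hcr := const_seg' y (2*k+1) (4*k) (fun s h1 h2 => hL s (by omega) (by omega) (by omega))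
      have hr0 : y (2*k+1) = 0 := (hcr (4*k) (by omega) le_rfl).symm.trans (hGn (by omega))
      have hzr : ∀ t, 2*k+1 ≤ t → t ≤ 4*k → y t = 0 := fun t h1 h2 => by rw [hcr t h1 h2, hr0]
      have hb0 : y (i-2) = 0 := by
        have hsum := hS0 (by omega)
        rw [← Finset.sum_Ico_consecutive y (by omega : 2*k ≤ 2*k+1) (by omega : 2*k+1 ≤ 4*k+1),
            sum_Ico_of_const y (y (i-2)) (2*k) (2*k+1) (fun t h1 h2 => hcb t (by omega) (by omega)),
            sum_Ico_of_const y 0 (2*k+1) (4*k+1) (fun t h1 h2 => hzr t (by omega) (by omega)),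
            mul_zero, add_zero] at hsum
        exact factor_zero (2*k+1-2*k) _ (by omega) (by simpa using hsum)
      have hzb : ∀ t, i-2 ≤ t → t ≤ 2*k → y t = 0 := fun t h1 h2 => by rw [hcb t h1 h2, hb0]
      have h0 : y 0 = 0 := by
        have hsum := hS1 (by omega)
        rw [← Finset.sum_Ico_consecutive y (by omega : 0 ≤ i-2) (by omega : i-2 ≤ 2*k+1),
            sum_Ico_of_const y (y 0) 0 (i-2) (fun t h1 h2 => hca t (by omega) (by omega)),
            sum_Ico_of_const y 0 (i-2) (2*k+1) (fun t h1 h2 => hzb t (by omega) (by omega)),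
            mul_zero, add_zero] at hsum
        exact factor_zero (i-2) _ (by omega) (by simpa using hsum)
      intro t ht
      rcases Nat.lt_or_ge t (i-2) with h | h
      · rw [hca t (by omega) (by omega), h0]
      · rcases Nat.lt_or_ge t (2*k+1) with h2 | h2
        · exact hzb t h (by omega)
        · exact hzr t h2 ht
    · -- i ≥ 2k+4 : α on [0, 2k], β on [2k+1, i-3], zero on [i-2, 4k]
      have hca := const_seg' y 0 (2*k) (fun s h1 h2 => hL s (by omega) (by omega) (by omega))
      have hcb := const_seg' y (2*k+1) (i-3) (fun s h1 h2 => hL s (by omega) (by omega) (by omega))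
      have hcr := const_seg' y (i-2) (4*k) (fun s h1 h2 => hL s (by omega) (by omega) (by omega))
      have hr0 : y (i-2) = 0 := (hcr (4*k) (by omega) le_rfl).symm.trans (hGn (by omega))
      have hzr : ∀ t, i-2 ≤ t → t ≤ 4*k → y t = 0 := fun t h1 h2 => by rw [hcr t h1 h2, hr0]
      have h0 : y 0 = 0 := by
        have hsum := hS1 (by omega)
        rw [sum_Ico_of_const y (y 0) 0 (2*k+1) (fun t h1 h2 => hca t (by omega) (by omega))] at hsum
        exact factor_zero (2*k+1) _ (by omega) (by simpa using hsum)
      have hza : ∀ t, t ≤ 2*k → y t = 0 := fun t ht => by rw [hca t (by omega) ht, h0]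
      have hb0 : y (2*k+1) = 0 := by
        have hsum := hS0 (by omega)
        rw [← Finset.sum_Ico_consecutive y (by omega : 2*k ≤ 2*k+1) (by omega : 2*k+1 ≤ 4*k+1),
            ← Finset.sum_Ico_consecutive y (by omega : 2*k+1 ≤ i-2) (by omega : i-2 ≤ 4*k+1),
            sum_Ico_of_const y 0 (2*k) (2*k+1) (fun t h1 h2 => hza t (by omega)),
            sum_Ico_of_const y (y (2*k+1)) (2*k+1) (i-2) (fun t h1 h2 => hcb t (by omega) (by omega)),
            sum_Ico_of_const y 0 (i-2) (4*k+1) (fun t h1 h2 => hzr t (by omega) (by omega)),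
            mul_zero, zero_add, mul_zero, add_zero] at hsum
        exact factor_zero (i-2-(2*k+1)) _ (by omega) (by simpa using hsum)
      intro t ht
      rcases Nat.lt_or_ge t (2*k+1) with h | h
      · exact hza t (by omega)
      · rcases Nat.lt_or_ge t (i-2) with h2 | h2
        · rw [hcb t h (by omega), hb0]
        · exact hzr t h2 ht

/-- master, deletions {i, 2k+2, 4k+3} ; right ground always absent; cut at link 2k-1 -/
lemma masterQ4 (hk : 1 ≤ k) (hi4 : i ≤ 4*k+3)
    (hG0 : 2 ≠ i → y 0 = 0)
    (hL : ∀ t, t < 4*k → t+3 ≠ i → t+3 ≠ 2*k+2 → y t = y (t+1))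
    (hS1 : 1 ≠ i → ∑ t ∈ Finset.Ico 0 (2*k+1), y t = 0)
    (hS0 : 0 ≠ i → ∑ t ∈ Finset.Ico (2*k) (4*k+1), y t = 0) :
    ∀ t, t ≤ 4*k → y t = 0 := by
  by_cases hA : i ≤ 1 ∨ i = 2*k+2 ∨ i = 4*k+3
  · -- left zero ≤ 2k-1, α on [2k, 4k]
    have hzl : ∀ t, t ≤ 2*k-1 → y t = 0 := by
      intro t ht
      rw [const_seg' y 0 (2*k-1) (fun s h1 h2 => hL s (by omega) (by omega) (by omega)) t (by omega) ht,
          hG0 (by omega)]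
    have hca := const_seg' y (2*k) (4*k) (fun s h1 h2 => hL s (by omega) (by omega) (by omega))
    have ha0 : y (2*k) = 0 := by
      by_cases h1i : i = 1
      · subst h1i
        have hsum := hS0 (by omega)
        rw [sum_Ico_of_const y (y (2*k)) (2*k) (4*k+1) (fun t h1 h2 => hca t (by omega) (by omega))] at hsum
        exact factor_zero (4*k+1-2*k) _ (by omega) (by simpa using hsum)
      · have hsum := hS1 (fun h => h1i h.symm)
        rw [← Finset.sum_Ico_consecutive y (by omega : 0 ≤ 2*k) (by omega : 2*k ≤ 2*k+1),
            sum_Ico_of_const y 0 0 (2*k) (fun t h1 h2 => hzl t (by omega)),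
            sum_Ico_of_const y (y (2*k)) (2*k) (2*k+1) (fun t h1 h2 => hca t (by omega) (by omega)),
            mul_zero, zero_add] at hsum
        exact factor_zero (2*k+1-2*k) _ (by omega) (by simpa using hsum)
    intro t ht
    rcases Nat.lt_or_ge t (2*k) with h | h
    · exact hzl t (by omega)
    · rw [hca t h ht, ha0]
  push_neg at hA
  obtain ⟨hA1, hA2, hA3⟩ := hA
  by_cases hB : i = 2
  · subst hB
    have hca := const_seg' y 0 (2*k-1) (fun s h1 h2 => hL s (by omega) (by omega) (by omega))
    have hcb := const_seg' y (2*k) (4*k) (fun s h1 h2 => hL s (by omega) (by omega) (by omega))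
    have hb0 : y (2*k) = 0 := by
      have hsum := hS0 (by omega)
      rw [sum_Ico_of_const y (y (2*k)) (2*k) (4*k+1) (fun t h1 h2 => hcb t (by omega) (by omega))] at hsum
      exact factor_zero (4*k+1-2*k) _ (by omega) (by simpa using hsum)
    have hzb : ∀ t, 2*k ≤ t → t ≤ 4*k → y t = 0 := fun t h1 h2 => by rw [hcb t h1 h2, hb0]
    have h0 : y 0 = 0 := by
      have hsum := hS1 (by omega)
      rw [← Finset.sum_Ico_consecutive y (by omega : 0 ≤ 2*k) (by omega : 2*k ≤ 2*k+1),
          sum_Ico_of_const y (y 0) 0 (2*k) (fun t h1 h2 => hca t (by omega) (by omega)),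
          sum_Ico_of_const y 0 (2*k) (2*k+1) (fun t h1 h2 => hzb t (by omega) (by omega)),
          mul_zero, add_zero] at hsum
      exact factor_zero (2*k) _ (by omega) (by simpa using hsum)
    intro t ht
    rcases Nat.lt_or_ge t (2*k) with h | h
    · rw [hca t (by omega) (by omega), h0]
    · exact hzb t h ht
  · -- 3 ≤ i ≤ 4k+2, i ≠ 2k+2
    rcases Nat.lt_or_ge i (2*k+2) with hcase | hcase
    · -- i < 2k+2 : zero [0,i-3], α [i-2, 2k-1], β [2k, 4k]
      have hzl : ∀ t, t ≤ i-3 → y t = 0 := by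
        intro t ht
        rw [const_seg' y 0 (i-3) (fun s h1 h2 => hL s (by omega) (by omega) (by omega)) t (by omega) ht,
            hG0 (by omega)]
      have hca := const_seg' y (i-2) (2*k-1) (fun s h1 h2 => hL s (by omega) (by omega) (by omega))
      have hcb := const_seg' y (2*k) (4*k) (fun s h1 h2 => hL s (by omega) (by omega) (by omega))
      have hb0 : y (2*k) = 0 := by
        have hsum := hS0 (by omega)
        rw [sum_Ico_of_const y (y (2*k)) (2*k) (4*k+1) (fun t h1 h2 => hcb t (by omega) (by omega))] at hsum
        exact factor_zero (4*k+1-2*k) _ (by omega) (by simpa using hsum)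
      have hzb : ∀ t, 2*k ≤ t → t ≤ 4*k → y t = 0 := fun t h1 h2 => by rw [hcb t h1 h2, hb0]
      have ha0 : y (i-2) = 0 := by
        have hsum := hS1 (by omega)
        rw [← Finset.sum_Ico_consecutive y (by omega : 0 ≤ i-2) (by omega : i-2 ≤ 2*k+1),
            ← Finset.sum_Ico_consecutive y (by omega : i-2 ≤ 2*k) (by omega : 2*k ≤ 2*k+1),
            sum_Ico_of_const y 0 0 (i-2) (fun t h1 h2 => hzl t (by omega)),
            sum_Ico_of_const y (y (i-2)) (i-2) (2*k) (fun t h1 h2 => hca t (by omega) (by omega)),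
            sum_Ico_of_const y 0 (2*k) (2*k+1) (fun t h1 h2 => hzb t (by omega) (by omega)),
            mul_zero, zero_add, mul_zero, add_zero] at hsum
        exact factor_zero (2*k-(i-2)) _ (by omega) (by simpa using hsum)
      intro t ht
      rcases Nat.lt_or_ge t (i-2) with h | h
      · exact hzl t (by omega)
      · rcases Nat.lt_or_ge t (2*k) with h2 | h2
        · rw [hca t h (by omega), ha0]
        · exact hzb t h2 ht
    · -- i ≥ 2k+3 : zero [0, 2k-1], α [2k, i-3], β [i-2, 4k]
      have hzl : ∀ t, t ≤ 2*k-1 → y t = 0 := by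
        intro t ht
        rw [const_seg' y 0 (2*k-1) (fun s h1 h2 => hL s (by omega) (by omega) (by omega)) t (by omega) ht,
            hG0 (by omega)]
      have hca := const_seg' y (2*k) (i-3) (fun s h1 h2 => hL s (by omega) (by omega) (by omega))
      have hcb := const_seg' y (i-2) (4*k) (fun s h1 h2 => hL s (by omega) (by omega) (by omega))
      have ha0 : y (2*k) = 0 := by
        have hsum := hS1 (by omega)
        rw [← Finset.sum_Ico_consecutive y (by omega : 0 ≤ 2*k) (by omega : 2*k ≤ 2*k+1),
            sum_Ico_of_const y 0 0 (2*k) (fun t h1 h2 => hzl t (by omega)),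
            sum_Ico_of_const y (y (2*k)) (2*k) (2*k+1) (fun t h1 h2 => hca t (by omega) (by omega)),
            mul_zero, zero_add] at hsum
        exact factor_zero (2*k+1-2*k) _ (by omega) (by simpa using hsum)
      have hza : ∀ t, 2*k ≤ t → t ≤ i-3 → y t = 0 := fun t h1 h2 => by rw [hca t h1 h2, ha0]
      have hb0 : y (i-2) = 0 := by
        have hsum := hS0 (by omega)
        rw [← Finset.sum_Ico_consecutive y (by omega : 2*k ≤ i-2) (by omega : i-2 ≤ 4*k+1),
            sum_Ico_of_const y 0 (2*k) (i-2) (fun t h1 h2 => hza t (by omega) (by omega)),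
            sum_Ico_of_const y (y (i-2)) (i-2) (4*k+1) (fun t h1 h2 => hcb t (by omega) (by omega)),
            mul_zero, zero_add] at hsum
        exact factor_zero (4*k+1-(i-2)) _ (by omega) (by simpa using hsum)
      intro t ht
      rcases Nat.lt_or_ge t (2*k) with h | h
      · exact hzl t (by omega)
      · rcases Nat.lt_or_ge t (i-2) with h2 | h2
        · exact hza t h (by omega)
        · rw [hcb t h2 ht, hb0]

end MQ


noncomputable def cvec (k i : ℕ) : EuclideanSpace ℂ (Fin (4*k+1)) :=
  WithLp.toLp 2 (fun t => ((CC k i t.val : ℤ) : ℂ))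

noncomputable def Xf (k : ℕ) (c : EuclideanSpace ℂ (Fin (4*k+1))) : ℕ → ℂ :=
  fun t => if h : t < 4*k+1 then c ⟨t, h⟩ else 0

lemma cinner_eq (k l : ℕ) (c : EuclideanSpace ℂ (Fin (4*k+1))) :
    (inner ℂ (cvec k l) c : ℂ) = ∑ t ∈ Finset.range (4*k+1), (CC k l t : ℂ) * Xf k c t := by
  simp only [PiLp.inner_apply, RCLike.inner_apply]
  rw [← Fin.sum_univ_eq_sum_range (fun t => (CC k l t : ℂ) * Xf k c t) (4*k+1)]
  apply Finset.sum_congr rfl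
  intro i _
  unfold cvec Xf
  rw [dif_pos i.isLt]
  rw [mul_comm]
  congr 1
  · exact map_intCast (starRingEnd ℂ) _

lemma c_zero (k : ℕ) (hk : 1 ≤ k) (c : EuclideanSpace ℂ (Fin (4*k+1))) (i0 q1 q2 : ℕ)
    (hi0 : i0 ≤ 4*k+3)
    (hQ : (q1 = 0 ∧ q2 = 2*k+1) ∨ (q1 = 1 ∧ q2 = 2*k+4) ∨ (q1 = 2 ∧ q2 = 2*k+3) ∨
          (q1 = 2*k+2 ∧ q2 = 4*k+3) ∨ (q1 = q2 ∧ q1 ≤ 4*k+3))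
    (HC : ∀ l, l < 4*k+4 → l ≠ i0 → l ≠ q1 → l ≠ q2 → (inner ℂ (cvec k l) c : ℂ) = 0) :
    c = 0 := by
  set X : ℕ → ℂ := Xf k c with hX
  set y : ℕ → ℂ := fun t => (-1)^t * X t with hy
  have hL : ∀ t, t < 4*k → (t+3 ≠ i0) → (t+3 ≠ q1) → (t+3 ≠ q2) → y t = y (t+1) := by
    intro t ht h1 h2 h3
    have e := HC (t+3) (by omega) h1 h2 h3
    rw [cinner_eq, gsl k X t ht] at e
    show (-1:ℂ)^t * X t = (-1)^(t+1) * X (t+1)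
    rw [pow_succ]
    linear_combination ((-1:ℂ))^t * e
  have hG0 : (2 ≠ i0) → (2 ≠ q1) → (2 ≠ q2) → y 0 = 0 := by
    intro h1 h2 h3
    have e := HC 2 (by omega) h1 h2 h3
    rw [cinner_eq, gs2 k X] at e
    show (-1:ℂ)^0 * X 0 = 0
    rw [e, mul_zero]
  have hGn : (4*k+3 ≠ i0) → (4*k+3 ≠ q1) → (4*k+3 ≠ q2) → y (4*k) = 0 := by
    intro h1 h2 h3
    have e := HC (4*k+3) (by omega) h1 h2 h3
    rw [cinner_eq, gsn k X] at e
    show (-1:ℂ)^(4*k) * X (4*k) = 0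
    rw [e, mul_zero]
  have hS1 : (1 ≠ i0) → (1 ≠ q1) → (1 ≠ q2) → ∑ t ∈ Finset.Ico 0 (2*k+1), y t = 0 := by
    intro h1 h2 h3
    have e := HC 1 (by omega) h1 h2 h3
    rw [cinner_eq, gs1 k X] at e
    exact e
  have hS0 : (0 ≠ i0) → (0 ≠ q1) → (0 ≠ q2) → ∑ t ∈ Finset.Ico (2*k) (4*k+1), y t = 0 := by
    intro h1 h2 h3
    have e := HC 0 (by omega) h1 h2 h3
    rw [cinner_eq, gs0 k X] at e
    exact e
  have hz : ∀ t, t ≤ 4*k → y t = 0 := by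
    rcases hQ with ⟨hq1, hq2⟩ | ⟨hq1, hq2⟩ | ⟨hq1, hq2⟩ | ⟨hq1, hq2⟩ | ⟨hq1, hq2⟩
    · subst hq1; subst hq2
      exact masterQ1 k i0 y hk hi0
        (fun h => hG0 h (by omega) (by omega))
        (fun h => hGn h (by omega) (by omega))
        (fun t ht h1 h2 => hL t ht h1 (by omega) h2)
        (fun h => hS1 h (by omega) (by omega))
    · subst hq1; subst hq2
      exact masterQ2 k i0 y hk hi0
        (fun h => hG0 h (by omega) (by omega))
        (fun h => hGn h (by omega) (by omega))
        (fun t ht h1 h2 => hL t ht h1 (by omega) h2)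
        (fun h => hS0 h (by omega) (by omega))
    · subst hq1; subst hq2
      exact masterQ3 k i0 y hk hi0
        (fun h => hGn h (by omega) (by omega))
        (fun t ht h1 h2 => hL t ht h1 (by omega) h2)
        (fun h => hS1 h (by omega) (by omega))
        (fun h => hS0 h (by omega) (by omega))
    · subst hq1; subst hq2
      exact masterQ4 k i0 y hk hi0
        (fun h => hG0 h (by omega) (by omega))
        (fun t ht h1 h2 => hL t ht h1 h2 (by omega))
        (fun h => hS1 h (by omega) (by omega))
        (fun h => hS0 h (by omega) (by omega))
    · subst hq1
      rcases le_total i0 q1 with hle | hle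
      · exact masterPair k i0 q1 y hk hle hq2
          (fun h1 h2 => hG0 h1 h2 h2)
          (fun h1 h2 => hGn h1 h2 h2)
          (fun t ht h1 h2 => hL t ht h1 h2 h2)
          (fun h1 h2 => hS1 h1 h2 h2)
          (fun h1 h2 => hS0 h1 h2 h2)
      · exact masterPair k q1 i0 y hk hle hi0
          (fun h1 h2 => hG0 h2 h1 h1)
          (fun h1 h2 => hGn h2 h1 h1)
          (fun t ht h1 h2 => hL t ht h2 h1 h1)
          (fun h1 h2 => hS1 h2 h1 h1)
          (fun h1 h2 => hS0 h2 h1 h1)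
  ext i
  have h1 : y i.val = 0 := hz i.val (by omega)
  have h2 : (-1:ℂ)^(i.val) ≠ 0 := pow_ne_zero _ (by norm_num)
  have h3 : X i.val = 0 := by
    have := h1
    rw [hy] at this
    exact (mul_eq_zero.mp this).resolve_left h2
  rw [hX] at h3
  unfold Xf at h3
  rw [dif_pos i.isLt] at h3
  simpa using h3


noncomputable def av (i : ℕ) : EuclideanSpace ℂ (Fin 2) := q2 (A0 i) (A1 i)
noncomputable def bv (k i : ℕ) : EuclideanSpace ℂ (Fin 2) := q2 (B0 k i) (B1 k i)

noncomputable def fvec (k i : ℕ) : ∀ j : Fin 3, EuclideanSpace ℂ (Fin (![2,2,4*k+1] j))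
  | ⟨0, _⟩ => av i
  | ⟨1, _⟩ => bv k i
  | ⟨2, _⟩ => cvec k i

lemma fvec0 (k i : ℕ) : fvec k i 0 = av i := rfl
lemma fvec1 (k i : ℕ) : fvec k i 1 = bv k i := rfl
lemma fvec2 (k i : ℕ) : fvec k i 2 = cvec k i := rfl

noncomputable def vv (k i : ℕ) : EuclideanSpace ℂ (∀ j : Fin 3, Fin (![2,2,4*k+1] j)) :=
  prodVec (fvec k i)

lemma inner_vv (k i : ℕ) (f : ∀ jj : Fin 3, EuclideanSpace ℂ (Fin (![2,2,4*k+1] jj))) :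
    (inner ℂ (vv k i) (prodVec f) : ℂ)
      = (inner ℂ (av i) (f 0) : ℂ) * (inner ℂ (bv k i) (f 1) : ℂ) * (inner ℂ (cvec k i) (f 2) : ℂ) := by
  rw [vv, inner_prodVec, Fin.prod_univ_three, fvec0, fvec1, fvec2]
  rfl

lemma inner_cvec (k i j : ℕ) : (inner ℂ (cvec k i) (cvec k j) : ℂ) = ((gram k i j : ℤ) : ℂ) := by
  simp only [PiLp.inner_apply, RCLike.inner_apply, cvec]
  unfold gram
  rw [Int.cast_sum, ← Fin.sum_univ_eq_sum_range (fun t => ((CC k i t * CC k j t : ℤ) : ℂ)) (4*k+1)]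
  apply Finset.sum_congr rfl
  intro t _
  rw [map_intCast]
  push_cast
  ring


lemma vv_orth (k i j : ℕ) (hk : 1 ≤ k) (hij : i < j) (hj : j ≤ 4*k+3) :
    (inner ℂ (vv k i) (vv k j) : ℂ) = 0 := by
  rw [show vv k j = prodVec (fvec k j) from rfl, inner_vv, fvec0, fvec1, fvec2]
  by_cases hsucc : j = i+1
  · subst hsucc
    rcases Nat.even_or_odd i with hpar | hpar
    · have h0 : (inner ℂ (av i) (av (i+1)) : ℂ) = 0 := by
        rw [av, av, inner_q2]
        exact_mod_cast A_edge i (Nat.even_iff.mp hpar)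
      rw [h0, zero_mul, zero_mul]
    · have hi2 : i % 2 = 1 := Nat.odd_iff.mp hpar
      have h0 : (inner ℂ (bv k i) (bv k (i+1)) : ℂ) = 0 := by
        rw [bv, bv, inner_q2]
        exact_mod_cast B_edge k i hk hi2 (by omega)
      rw [h0, mul_zero, zero_mul]
  by_cases hwrap : i = 0 ∧ j = 4*k+3
  · obtain ⟨rfl, rfl⟩ := hwrap
    have h0 : (inner ℂ (bv k 0) (bv k (4*k+3)) : ℂ) = 0 := by
      rw [bv, bv, inner_q2]
      have := B_wrap k hk
      exact_mod_cast (by linarith : B0 k 0 * B0 k (4*k+3) + B1 k 0 * B1 k (4*k+3) = 0)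
    rw [h0, mul_zero, zero_mul]
  by_cases hch0 : i = 0 ∧ j = 2*k+2
  · obtain ⟨rfl, rfl⟩ := hch0
    have h0 : (inner ℂ (bv k 0) (bv k (2*k+2)) : ℂ) = 0 := by
      rw [bv, bv, inner_q2]
      exact_mod_cast B_chord0 k hk
    rw [h0, mul_zero, zero_mul]
  by_cases hch1 : i = 1 ∧ j = 2*k+3
  · obtain ⟨rfl, rfl⟩ := hch1
    have h0 : (inner ℂ (bv k 1) (bv k (2*k+3)) : ℂ) = 0 := by
      rw [bv, bv, inner_q2]
      exact_mod_cast B_chord1 k hk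
    rw [h0, mul_zero, zero_mul]
  · have h0 : (inner ℂ (cvec k i) (cvec k j) : ℂ) = 0 := by
      rw [inner_cvec]
      exact_mod_cast gram_zero k i j hij hj hk hsucc hch0 hch1 hwrap
    rw [h0, mul_zero]


lemma A0_pos (i : ℕ) : 1 ≤ A0 i := by unfold A0; split_ifs <;> omega
lemma B0_pos (k i : ℕ) : 1 ≤ B0 k i := by
  have := Bs_pos k i; unfold B0; split_ifs <;> omega

def wit (k i : ℕ) : ℕ := if i = 0 then 4*k else if i = 1 then 0 else if i ≤ 4*k+2 then i-2 else 4*k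

lemma wit_lt (k i : ℕ) : wit k i < 4*k+1 := by unfold wit; split_ifs <;> omega

lemma CC_wit_ne (k i : ℕ) (hi : i ≤ 4*k+3) : CC k i (wit k i) ≠ 0 := by
  by_cases h0 : i = 0
  · subst h0
    have hw : wit k 0 = 4*k := by unfold wit; rw [if_pos rfl]
    rw [hw]
    unfold CC
    rw [if_pos rfl, if_pos (by omega)]
    exact pow_ne_zero _ (by norm_num)
  by_cases h1 : i = 1
  · subst h1
    have hw : wit k 1 = 0 := by unfold wit; rw [if_neg (by omega), if_pos rfl]
    rw [hw]
    unfold CC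
    rw [if_neg (by omega), if_pos rfl, if_pos (by omega)]
    norm_num
  by_cases h2 : i ≤ 4*k+2
  · have hw : wit k i = i-2 := by unfold wit; rw [if_neg h0, if_neg h1, if_pos h2]
    rw [hw, CC_chain k i _ (by omega), if_pos (by omega)]
    norm_num
  · have hw : wit k i = 4*k := by unfold wit; rw [if_neg h0, if_neg h1, if_neg h2]
    rw [hw, CC_chain k i _ (by omega), if_pos (by omega)]
    norm_num

lemma av_zero_ne (i : ℕ) : av i 0 ≠ 0 := by
  have h : av i 0 = ((A0 i : ℤ) : ℂ) := by
    show (if (0 : Fin 2).val = 0 then ((A0 i : ℤ):ℂ) else ((A1 i : ℤ):ℂ)) = _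
    norm_num
  rw [h]
  have := A0_pos i
  exact Int.cast_ne_zero.mpr (by omega : A0 i ≠ 0)

lemma bv_zero_ne (k i : ℕ) : bv k i 0 ≠ 0 := by
  have h : bv k i 0 = ((B0 k i : ℤ) : ℂ) := by
    show (if (0 : Fin 2).val = 0 then ((B0 k i : ℤ):ℂ) else ((B1 k i : ℤ):ℂ)) = _
    norm_num
  rw [h]
  have := B0_pos k i
  exact Int.cast_ne_zero.mpr (by omega : B0 k i ≠ 0)

noncomputable def x0 (k i : ℕ) : ∀ j : Fin 3, Fin (![2,2,4*k+1] j)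
  | ⟨0, _⟩ => (0 : Fin 2)
  | ⟨1, _⟩ => (0 : Fin 2)
  | ⟨2, _⟩ => (⟨wit k i, wit_lt k i⟩ : Fin (4*k+1))

lemma vv_ne_zero (k i : ℕ) (hi : i ≤ 4*k+3) : vv k i ≠ 0 := by
  intro h
  have h2 : vv k i (x0 k i) = 0 := by rw [h]; rfl
  rw [show vv k i (x0 k i) = ∏ j, fvec k i j (x0 k i j) from rfl, Fin.prod_univ_three] at h2
  have e0 : fvec k i 0 (x0 k i 0) = av i 0 := rfl
  have e1 : fvec k i 1 (x0 k i 1) = bv k i 0 := rfl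
  have e2 : fvec k i 2 (x0 k i 2) = ((CC k i (wit k i) : ℤ) : ℂ) := rfl
  rw [e0, e1, e2] at h2
  rcases mul_eq_zero.mp h2 with h3 | h3
  · rcases mul_eq_zero.mp h3 with h4 | h4
    · exact av_zero_ne i h4
    · exact bv_zero_ne k i h4
  · exact CC_wit_ne k i hi (Int.cast_eq_zero.mp h3)

lemma a_unique (l l' : ℕ) (h : l ≠ l') (a : EuclideanSpace ℂ (Fin 2))
    (h1 : (inner ℂ (av l) a : ℂ) = 0) (h2 : (inner ℂ (av l') a : ℂ) = 0) : a = 0 := by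
  refine qubit_zero (A0 l) (A1 l) (A0 l') (A1 l') ?_ a h1 h2
  have := A_det l l' h
  have hc := mul_comm (A1 l) (A0 l')
  intro hz; apply this; linarith

lemma b_unique (k l l' : ℕ) (hk : 1 ≤ k) (h : l ≠ l') (hnp : ¬ isBpair k l l')
    (b : EuclideanSpace ℂ (Fin 2))
    (h1 : (inner ℂ (bv k l) b : ℂ) = 0) (h2 : (inner ℂ (bv k l') b : ℂ) = 0) : b = 0 := by
  refine qubit_zero (B0 k l) (B1 k l) (B0 k l') (B1 k l') ?_ b h1 h2
  have := B_det k l l' hk h hnp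
  have hc := mul_comm (B1 k l) (B0 k l')
  intro hz; apply this; linarith

end UPB18

theorem stmt18 (k : ℕ) (hk : 1 ≤ k) :
    ∃ S : Finset (EuclideanSpace ℂ (∀ j : Fin 3, Fin (![2, 2, 4 * k + 1] j))),
      IsUPB S ∧ S.card = 4 * k + 4 := by
  classical
  open UPB18 in
  refine ⟨(Finset.range (4*k+4)).image (UPB18.vv k), ⟨?_, ?_, ?_⟩, ?_⟩
  · -- product states
    intro v hv
    obtain ⟨i, hi, rfl⟩ := Finset.mem_image.mp hv
    rw [Finset.mem_range] at hi
    exact ⟨UPB18.vv_ne_zero k i (by omega), UPB18.fvec k i, rfl⟩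
  · -- orthogonality
    intro v hv w hw hvw
    obtain ⟨i, hi, rfl⟩ := Finset.mem_image.mp hv
    obtain ⟨j, hj, rfl⟩ := Finset.mem_image.mp hw
    rw [Finset.mem_range] at hi hj
    have hij : i ≠ j := fun h => hvw (by rw [h])
    rcases Nat.lt_or_ge i j with h | h
    · exact UPB18.vv_orth k i j hk h (by omega)
    · have hlt : j < i := by omega
      exact inner_eq_zero_symm.mp (UPB18.vv_orth k j i hk hlt (by omega))
  · -- unextendibility
    intro z hz hall
    obtain ⟨hz0, f, rfl⟩ := hz
    have ha : f 0 ≠ 0 := fun h => hz0 (UPB18.prodVec_eq_zero f 0 h)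
    have hb : f 1 ≠ 0 := fun h => hz0 (UPB18.prodVec_eq_zero f 1 h)
    have heq : ∀ i, i < 4*k+4 →
        (inner ℂ (UPB18.av i) (f 0) : ℂ) * (inner ℂ (UPB18.bv k i) (f 1) : ℂ)
          * (inner ℂ (UPB18.cvec k i) (f 2) : ℂ) = 0 := by
      intro i hi
      have h := hall (UPB18.vv k i)
        (Finset.mem_image.mpr ⟨i, Finset.mem_range.mpr hi, rfl⟩)
      rw [UPB18.inner_vv k i f] at h
      exact h
    obtain ⟨i0, hi0le, hi0P⟩ : ∃ i0, i0 ≤ 4*k+3 ∧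
        ∀ l, l < 4*k+4 → (inner ℂ (UPB18.av l) (f 0) : ℂ) = 0 → l = i0 := by
      by_cases hEA : ∃ l, l < 4*k+4 ∧ (inner ℂ (UPB18.av l) (f 0) : ℂ) = 0
      · obtain ⟨i0, hi0, hi0z⟩ := hEA
        refine ⟨i0, by omega, fun l hl hlz => ?_⟩
        by_contra hne
        exact ha (UPB18.a_unique l i0 hne (f 0) hlz hi0z)
      · exact ⟨0, by omega, fun l hl hlz => absurd ⟨l, hl, hlz⟩ hEA⟩
    obtain ⟨q1, q2, hQ, hq12P⟩ : ∃ q1 q2,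
        ((q1 = 0 ∧ q2 = 2*k+1) ∨ (q1 = 1 ∧ q2 = 2*k+4) ∨ (q1 = 2 ∧ q2 = 2*k+3) ∨
          (q1 = 2*k+2 ∧ q2 = 4*k+3) ∨ (q1 = q2 ∧ q1 ≤ 4*k+3)) ∧
        ∀ l, l < 4*k+4 → (inner ℂ (UPB18.bv k l) (f 1) : ℂ) = 0 → (l = q1 ∨ l = q2) := by
      by_cases hEB : ∃ l, l < 4*k+4 ∧ (inner ℂ (UPB18.bv k l) (f 1) : ℂ) = 0
      · obtain ⟨j0, hj0, hj0z⟩ := hEB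
        have key : ∀ l, l < 4*k+4 → (inner ℂ (UPB18.bv k l) (f 1) : ℂ) = 0 →
            l = j0 ∨ UPB18.isBpair k j0 l := by
          intro l hl hlz
          by_cases h : l = j0
          · exact Or.inl h
          · refine Or.inr ?_
            by_contra hnp
            exact hb (UPB18.b_unique k j0 l hk (fun e => h e.symm) hnp (f 1) hj0z hlz)
        by_cases c1 : j0 = 0 ∨ j0 = 2*k+1
        · refine ⟨0, 2*k+1, Or.inl ⟨rfl, rfl⟩, fun l hl hlz => ?_⟩
          rcases key l hl hlz with h | h
          · omega
          · unfold UPB18.isBpair at h; omega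
        by_cases c2 : j0 = 1 ∨ j0 = 2*k+4
        · refine ⟨1, 2*k+4, Or.inr (Or.inl ⟨rfl, rfl⟩), fun l hl hlz => ?_⟩
          rcases key l hl hlz with h | h
          · omega
          · unfold UPB18.isBpair at h; omega
        by_cases c3 : j0 = 2 ∨ j0 = 2*k+3
        · refine ⟨2, 2*k+3, Or.inr (Or.inr (Or.inl ⟨rfl, rfl⟩)), fun l hl hlz => ?_⟩
          rcases key l hl hlz with h | h
          · omega
          · unfold UPB18.isBpair at h; omega
        by_cases c4 : j0 = 2*k+2 ∨ j0 = 4*k+3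
        · refine ⟨2*k+2, 4*k+3, Or.inr (Or.inr (Or.inr (Or.inl ⟨rfl, rfl⟩))), fun l hl hlz => ?_⟩
          rcases key l hl hlz with h | h
          · omega
          · unfold UPB18.isBpair at h; omega
        · refine ⟨j0, j0, Or.inr (Or.inr (Or.inr (Or.inr ⟨rfl, by omega⟩))), fun l hl hlz => ?_⟩
          rcases key l hl hlz with h | h
          · omega
          · unfold UPB18.isBpair at h; omega
      · exact ⟨0, 0, Or.inr (Or.inr (Or.inr (Or.inr ⟨rfl, by omega⟩))),
          fun l hl hlz => absurd ⟨l, hl, hlz⟩ hEB⟩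
    have HC : ∀ l, l < 4*k+4 → l ≠ i0 → l ≠ q1 → l ≠ q2 →
        (inner ℂ (UPB18.cvec k l) (f 2) : ℂ) = 0 := by
      intro l hl h1 h2 h3
      rcases mul_eq_zero.mp (heq l hl) with h | h
      · rcases mul_eq_zero.mp h with h' | h'
        · exact absurd (hi0P l hl h') h1
        · rcases hq12P l hl h' with h'' | h''
          · exact absurd h'' h2
          · exact absurd h'' h3
      · exact h
    have hc0 : f 2 = 0 := UPB18.c_zero k hk (f 2) i0 q1 q2 hi0le hQ HC
    exact hz0 (UPB18.prodVec_eq_zero f 2 hc0)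
  · -- cardinality
    have key : ∀ i j, i < 4*k+4 → j < 4*k+4 → i < j → UPB18.vv k i ≠ UPB18.vv k j := by
      intro i j hi hj hlt heq
      have h0 := UPB18.vv_orth k i j hk hlt (by omega)
      rw [← heq, inner_self_eq_zero] at h0
      exact UPB18.vv_ne_zero k i (by omega) h0
    rw [Finset.card_image_of_injOn, Finset.card_range]
    intro i hi j hj e
    simp only [Finset.coe_range, Set.mem_Iio] at hi hj
    rcases lt_trichotomy i j with h | h | h
    · exact absurd e (key i j hi hj h)
    · exact h
    · exact absurd e.symm (key j i hj hi h)
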